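/- arXiv:1010.3039 — 6 statements merged into one kernel-verified Lean document; each statement's English description precedes it below -/
import Mathlib

section
/- Let L be a regular n-variable language over a finite alphabet A. Then there exists a positive integer p such that for every tuple (w_1,...,w_n) in L with m := max_i |w_i| >= p, there exist integers k >= 1 and l >= 0 with k + l <= m such that, decomposing the i-th component of the padded string of (w_1,...,w_n) as u_i m_i v_i, where m_i consists of its k-th through (k+l)-th letters, the following hold: each m_i consists entirely of letters of A or entirely of padding symbols $, and for every r >= 1 the n-tuple of words obtained from (u_1 m_1^r v_1, ..., u_n m_n^r v_n) by deleting all $ symbols lies in L. -/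
/-- The maximum length of the components of a tuple of words. -/
def maxLen {A : Type} {n : ℕ} (w : Fin n → List A) : ℕ :=
  (Finset.univ : Finset (Fin n)).sup fun i => (w i).length

/-- The padded string of a tuple `(w 1, …, w n)`: the word of length `maxLen w`
over the padded alphabet (letters are tuples `Fin n → Option A`, with `none`
playing the role of the padding symbol `$`) whose `k`-th letter has `i`-th
coordinate the `k`-th letter of `w i`, or `$` past the end of `w i`. -/
def paddedString {A : Type} {n : ℕ} (w : Fin n → List A) : List (Fin n → Option A) :=
  (List.range (maxLen w)).map fun k i => (w i)[k]?

/-- Deleting all padding symbols from a word over the padded alphabet,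
coordinate by coordinate. -/
def unpad {A : Type} {n : ℕ} (s : List (Fin n → Option A)) : Fin n → List A :=
  fun i => s.filterMap fun σ => σ i

/-- An `n`-variable language over `A` is regular if its padded extension (the set
of padded strings of its elements) is a regular language over the padded alphabet. -/
def IsRegularTupleLang {A : Type} {n : ℕ} (L : Set (Fin n → List A)) : Prop :=
  Language.IsRegular { s : List (Fin n → Option A) | ∃ w ∈ L, s = paddedString w }

lemma filterMap_getElem?_range {A : Type} (l : List A) (M : ℕ) (h : l.length ≤ M) :
    (List.range M).filterMap (fun k => l[k]?) = l := by
  induction l generalizing M with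
  | nil => simp
  | cons a l ih =>
    obtain ⟨M', rfl⟩ : ∃ M', M = M' + 1 := ⟨M - 1, by simp at h; omega⟩
    rw [List.range_succ_eq_map, List.filterMap_cons, List.filterMap_map]
    simp only [List.getElem?_cons_zero, Function.comp_def, List.getElem?_cons_succ]
    rw [ih M' (by simpa using h)]

lemma unpad_paddedString {A : Type} {n : ℕ} (w : Fin n → List A) :
    unpad (paddedString w) = w := by
  funext i
  simp only [unpad, paddedString, List.filterMap_map, Function.comp_def]
  exact filterMap_getElem?_range (w i) (maxLen w)
    (Finset.le_sup (f := fun i => (w i).length) (Finset.mem_univ i))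

lemma evalFrom_flatten_replicate {α σ : Type*} (M : DFA α σ) (q : σ) (x : List α)
    (h : M.evalFrom q x = q) : ∀ r : ℕ, M.evalFrom q (List.replicate r x).flatten = q := by
  intro r
  induction r with
  | zero => simp [DFA.evalFrom]
  | succ r ih => rw [List.replicate_succ, List.flatten_cons, DFA.evalFrom_of_append, h, ih]

lemma exists_gap (T : Finset ℕ) (C m : ℕ) (h0 : (0 : ℕ) ∈ T) (hm : m ∈ T)
    (hcard : T.card * C < m) :
    ∃ a ∈ T, a + C ≤ m ∧ ∀ t ∈ T, t ≤ a ∨ a + C ≤ t := by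
  by_contra hcon
  push_neg at hcon
  set g : ℕ → ℕ := fun x => (T.filter (· ≤ x)).sup id with hg
  have key : ∀ x < m, g x ∈ T ∧ g x ≤ x ∧ x < g x + C := by
    intro x hx
    have hne : (T.filter (· ≤ x)).Nonempty := ⟨0, by simp [h0]⟩
    obtain ⟨b, hb, hbe⟩ := Finset.exists_mem_eq_sup _ hne id
    have hbmem := Finset.mem_filter.mp hb
    have hgx : g x = b := hbe
    have hmax : ∀ t ∈ T, t ≤ x → t ≤ g x := fun t ht htx =>
      Finset.le_sup (f := id) (Finset.mem_filter.mpr ⟨ht, htx⟩)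
    refine ⟨hgx ▸ hbmem.1, hgx ▸ hbmem.2, ?_⟩
    by_cases hC : g x + C ≤ m
    · obtain ⟨t, ht, hlt, hlt'⟩ := hcon (g x) (hgx ▸ hbmem.1) hC
      by_cases hxt : t ≤ x
      · exact absurd (hmax t ht hxt) (by omega)
      · omega
    · omega
  have hmaps : ∀ x ∈ Finset.range m, g x ∈ T := fun x hx =>
    (key x (Finset.mem_range.mp hx)).1
  have hfib : ∀ b ∈ T, (Finset.filter (fun x => g x = b) (Finset.range m)).card ≤ C := by
    intro b hb
    have hsub : Finset.filter (fun x => g x = b) (Finset.range m) ⊆ Finset.Ico b (b + C) := by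
      intro x hx
      simp only [Finset.mem_filter, Finset.mem_range] at hx
      obtain ⟨hxm, hgx⟩ := hx
      obtain ⟨_, h1, h2⟩ := key x hxm
      rw [Finset.mem_Ico]
      omega
    calc _ ≤ (Finset.Ico b (b + C)).card := Finset.card_le_card hsub
    _ = C := by simp
  have := Finset.card_le_mul_card_image_of_maps_to hmaps C hfib
  simp only [Finset.card_range] at this
  rw [mul_comm] at this
  omega
/-- **Pumping lemma for regular `n`-variable languages** (Lemma 2.13 of the paper).
If `L` is a regular `n`-variable language over a finite alphabet `A`, there is a
positive integer `p` such that every `w ∈ L` whose maximal component length `m` is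
at least `p` admits `k ≥ 1`, `l ≥ 0` with `k + l ≤ m` such that, splitting the
padded string of `w` as `u ++ mid ++ v` where `mid` occupies positions `k` through
`k + l` (so `|u| = k - 1` and `|mid| = l + 1`), each coordinate of `mid` consists
entirely of letters of `A` or entirely of padding symbols, and for every `r ≥ 1`
the tuple obtained from `u ++ mid^r ++ v` by deleting all padding symbols is in `L`. -/
theorem pumping_regular_tuple_language {A : Type} [Fintype A] {n : ℕ} (hn : 1 ≤ n)
    (L : Set (Fin n → List A)) (hL : IsRegularTupleLang L) :
    ∃ p : ℕ, 0 < p ∧ ∀ w ∈ L, p ≤ maxLen w →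
      ∃ k l : ℕ, 1 ≤ k ∧ k + l ≤ maxLen w ∧
        ∃ u mid v : List (Fin n → Option A),
          paddedString w = u ++ mid ++ v ∧
          u.length = k - 1 ∧ mid.length = l + 1 ∧
          (∀ i : Fin n, (∀ σ ∈ mid, σ i ≠ none) ∨ (∀ σ ∈ mid, σ i = none)) ∧
          ∀ r : ℕ, 1 ≤ r → unpad (u ++ (List.replicate r mid).flatten ++ v) ∈ L := by
  obtain ⟨σ, _, M, hM⟩ := hL
  set C := Fintype.card σ with hC
  refine ⟨(n + 2) * C + 1, Nat.succ_pos _, ?_⟩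
  intro w hw hm
  set m := maxLen w with hmdef
  set T : Finset ℕ :=
    insert 0 (insert m ((Finset.univ : Finset (Fin n)).image fun i => (w i).length)) with hT
  have hTcard : T.card ≤ n + 2 := by
    calc T.card ≤ (insert m ((Finset.univ : Finset (Fin n)).image
          fun i => (w i).length)).card + 1 := Finset.card_insert_le _ _
    _ ≤ ((Finset.univ : Finset (Fin n)).image fun i => (w i).length).card + 2 := by
        have := Finset.card_insert_le m
          ((Finset.univ : Finset (Fin n)).image fun i => (w i).length)
        omega
    _ ≤ n + 2 := by
        have := Finset.card_image_le (s := (Finset.univ : Finset (Fin n)))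
          (f := fun i => (w i).length)
        simp at this
        omega
  obtain ⟨a, haT, haCm, hgap⟩ := exists_gap T C m (by simp [hT]) (by simp [hT])
    (by nlinarith [hTcard, hm])
  set s := paddedString w with hsdef
  have hslen : s.length = m := by simp [hsdef, paddedString, hmdef]
  have hsmem : s ∈ M.accepts := by
    rw [hM]; exact ⟨w, hw, rfl⟩
  obtain ⟨j₁, j₂, hj12, hj2C, hq⟩ : ∃ j₁ j₂ : ℕ, j₁ < j₂ ∧ j₂ ≤ C ∧
      M.evalFrom M.start (s.take (a + j₁)) = M.evalFrom M.start (s.take (a + j₂)) := by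
    obtain ⟨j, j', hne, hq⟩ := Fintype.exists_ne_map_eq_of_card_lt
      (fun j : Fin (C + 1) => M.evalFrom M.start (s.take (a + j))) (by simp [hC])
    rcases hne.lt_or_gt with h | h
    · exact ⟨j, j', h, Nat.lt_succ_iff.mp j'.isLt, hq⟩
    · exact ⟨j', j, h, Nat.lt_succ_iff.mp j.isLt, hq.symm⟩
  set u := s.take (a + j₁) with hu
  set mid := (s.drop (a + j₁)).take (j₂ - j₁) with hmid
  set v := s.drop (a + j₂) with hv
  have hum : u ++ mid = s.take (a + j₂) := by
    have h : a + j₂ = (a + j₁) + (j₂ - j₁) := by omega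
    rw [h, List.take_add]
  have hsplit : s = u ++ mid ++ v := by
    rw [hum]; exact (List.take_append_drop _ _).symm
  have hulen : u.length = a + j₁ := by
    simp only [hu, List.length_take, hslen]; omega
  have hmidlen : mid.length = j₂ - j₁ := by
    simp only [hmid, List.length_take, List.length_drop, hslen]; omega
  have hmidget : ∀ (idx : ℕ) (h : idx < mid.length) (i : Fin n),
      mid[idx] i = (w i)[a + j₁ + idx]? := by
    intro idx h i
    have h1 : idx < (s.drop (a + j₁)).length := by
      simp only [hmid, List.length_take] at h; omega
    have h2 : a + j₁ + idx < s.length := by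
      simp only [List.length_drop] at h1; omega
    rw [show mid[idx] = (s.drop (a + j₁))[idx] from List.getElem_take ..,
      List.getElem_drop]
    have hpos : a + j₁ + idx < maxLen w := by rw [hslen] at h2; exact h2
    have h3 : s[a + j₁ + idx]? = some (fun i => (w i)[a + j₁ + idx]?) := by
      rw [hsdef]
      simp [paddedString, List.getElem?_range, hpos]
    rw [List.getElem?_eq_getElem h2] at h3
    exact congrFun (Option.some.inj h3) i
  refine ⟨a + j₁ + 1, j₂ - j₁ - 1, by omega, by omega,
    u, mid, v, hsplit, by omega, by omega, ?_, ?_⟩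
  · intro i
    have hti : (w i).length ∈ T := by
      simp only [hT, Finset.mem_insert, Finset.mem_image]
      exact Or.inr (Or.inr ⟨i, Finset.mem_univ i, rfl⟩)
    rcases hgap _ hti with h | h
    · right
      intro σ' hσ'
      obtain ⟨idx, hidx, rfl⟩ := List.mem_iff_getElem.mp hσ'
      rw [hmidget idx hidx i]
      exact List.getElem?_eq_none (by omega)
    · left
      intro σ' hσ'
      obtain ⟨idx, hidx, rfl⟩ := List.mem_iff_getElem.mp hσ'
      rw [hmidget idx hidx i]
      have : a + j₁ + idx < (w i).length := by
        have := hmidlen ▸ hidx; omega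
      simp [List.getElem?_eq_getElem this]
  · intro r hr
    have hmideval : M.evalFrom (M.evalFrom M.start u) mid = M.evalFrom M.start u := by
      rw [← DFA.evalFrom_of_append, hum, ← hq]
    have hpump : u ++ (List.replicate r mid).flatten ++ v ∈ M.accepts := by
      rw [DFA.mem_accepts]
      have e1 : M.eval (u ++ (List.replicate r mid).flatten ++ v)
          = M.evalFrom (M.evalFrom M.start u) v := by
        show M.evalFrom M.start _ = _
        rw [DFA.evalFrom_of_append, DFA.evalFrom_of_append,
          evalFrom_flatten_replicate M _ mid hmideval]
      have e2 : M.evalFrom M.start s = M.evalFrom (M.evalFrom M.start u) v := by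
        rw [hsplit, DFA.evalFrom_of_append, DFA.evalFrom_of_append, hmideval]
      rw [e1, ← e2]
      exact (DFA.mem_accepts M).mp hsmem
    rw [hM] at hpump
    obtain ⟨w', hw', heq⟩ := hpump
    rw [heq, unpad_paddedString]
    exact hw'
end

section
/- For every finite alphabet A, every n >= 1, and every n-variable language L over A, L is accepted by some n-tape sorted asynchronous automaton over A if and only if L is accepted by some n-tape semi-sorted asynchronous automaton over A. -/
/-- An `n`-tape semi-sorted (deterministic) asynchronous automaton over `A`:
a partial deterministic finite state automaton over `A ∪ {$}` (unique start state,
no `ε`-transitions, at most one transition from each state for each letter; the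
padding symbol `$` is modelled by `none : Option A`), together with a partition of
its states into `n` sets (recorded by `tape`, where `tape s = i` means `s ∈ S_i`). -/
structure SemiSortedAA (A : Type) (n : ℕ) where
  State : Type
  fintype : Fintype State
  start : State
  accept : Set State
  /-- partial deterministic transition function over the alphabet `A ∪ {$}` -/
  step : State → Option A → Option State
  /-- the index `i` such that the state lies in `S_i` -/
  tape : State → Fin n

namespace SemiSortedAA

variable {A : Type} {n : ℕ}

/-- `M.Run s r f` : starting in state `s` with remaining (still unread) content `r i`
on the `i`-th tape, the automaton can consume all the remaining content and end in
state `f`, where from a state `s` it reads the next letter of tape `M.tape s`.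
This is exactly the existence of a shuffle of the tape contents labelling a path
from `s` to `f` in which every letter originating from the `i`-th tape is read
while the automaton is in a state of `S_i`. -/
inductive Run (M : SemiSortedAA A n) :
    M.State → (Fin n → List (Option A)) → M.State → Prop
  | nil (s : M.State) : Run M s (fun _ => []) s
  | step {s t f : M.State} {c : Option A} {rest : List (Option A)}
      {r : Fin n → List (Option A)}
      (h : M.step s c = some t)
      (hr : r (M.tape s) = c :: rest)
      (hrun : Run M t (Function.update r (M.tape s) rest) f) :
      Run M s r f

/-- `M` accepts the tuple of words `(w 1, …, w n)` if some shuffle of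
`(w 1 $, …, w n $)` labels a path from the start state to an accept state,
each letter from the `i`-th word (including its terminal `$`) being read in `S_i`. -/
def Accepts (M : SemiSortedAA A n) (w : Fin n → List A) : Prop :=
  ∃ f ∈ M.accept, M.Run M.start (fun i => (w i).map some ++ [none]) f

end SemiSortedAA

/-- An `n`-variable language is quasi-regular if it is the language accepted by some
`n`-tape semi-sorted asynchronous automaton. -/
def IsQuasiRegular {A : Type} {n : ℕ} (L : Set (Fin n → List A)) : Prop :=
  ∃ M : SemiSortedAA A n, ∀ w, w ∈ L ↔ M.Accepts w

/-- An `n`-tape sorted asynchronous automaton over `A` (a partial deterministic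
finite state automaton over `A ∪ {$}`, with `$` modelled by `none : Option A`).
`sort s = some (i, V)` means `s ∈ S_i^V`, and `sort s = none` means that `s` is
the unique element of `S_f`, which is the unique accept state. -/
structure SortedAA (A : Type) (n : ℕ) where
  State : Type
  fintype : Fintype State
  start : State
  /-- the unique element of `S_f`, which is also the unique accept state -/
  final : State
  /-- partial deterministic transition function over the alphabet `A ∪ {$}` -/
  step : State → Option A → Option State
  /-- the sorting of the states: `some (i, V)` means the state is in `S_i^V` -/
  sort : State → Option (Fin n × Finset (Fin n))
  /-- `S_f` consists exactly of the final state -/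
  sort_final : ∀ s, sort s = none ↔ s = final
  /-- states of `S_i^V` require `i ∉ V` (so in particular `V` is proper) -/
  sort_mem : ∀ s i V, sort s = some (i, V) → i ∉ V
  /-- the start state lies in some `S_i^∅` -/
  start_sort : ∃ i, sort start = some (i, (∅ : Finset (Fin n)))
  /-- no transitions leave the final state -/
  step_final : ∀ c, step final c = none
  /-- a `$`-transition goes from `S_i^V` to some `S_j^{V ∪ {i}}` with `j ≠ i`,
  or to the final state when `V ∪ {i} = {1, …, n}`; together with `letter_step`
  this says that a transition is labelled `$` exactly when it goes from a set
  `S_i^V` to a set `S_j^{V ∪ {i}}` (or to `S_f`) -/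
  dollar_step : ∀ s t, step s none = some t →
    ∃ i V, sort s = some (i, V) ∧
      ((insert i V = (Finset.univ : Finset (Fin n)) ∧ t = final) ∨
        (∃ j W, sort t = some (j, W) ∧ j ≠ i ∧ W = insert i V))
  /-- a non-`$`-transition from a state of `S_i^V` ends in some `S_j^V` with `j ∉ V` -/
  letter_step : ∀ s t a, step s (some a) = some t →
    ∃ i V j, sort s = some (i, V) ∧ sort t = some (j, V) ∧ j ∉ V

namespace SortedAA

variable {A : Type} {n : ℕ}

/-- Runs of a sorted asynchronous automaton: in a state of `S_i^V` the automaton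
reads the next remaining letter of the `i`-th tape.  `M.Run s r f` is the existence
of a shuffle of the remaining tape contents labelling a path from `s` to `f` in
which each letter originating from the `i`-th tape is read in a state of some
`S_i^V`. -/
inductive Run (M : SortedAA A n) :
    M.State → (Fin n → List (Option A)) → M.State → Prop
  | nil (s : M.State) : Run M s (fun _ => []) s
  | step {s t f : M.State} {c : Option A} {rest : List (Option A)}
      {r : Fin n → List (Option A)} {i : Fin n} {V : Finset (Fin n)}
      (hs : M.sort s = some (i, V))
      (h : M.step s c = some t)
      (hr : r i = c :: rest)
      (hrun : Run M t (Function.update r i rest) f) :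
      Run M s r f

/-- Acceptance for sorted asynchronous automata: some shuffle of
`(w 1 $, …, w n $)` labels a path from the start state to the accept state. -/
def Accepts (M : SortedAA A n) (w : Fin n → List A) : Prop :=
  M.Run M.start (fun i => (w i).map some ++ [none]) M.final

end SortedAA

section AuxProof

open Classical

variable {A : Type} {n : ℕ}

namespace SortedAA

/-- Forget the sorting: a sorted automaton as a semi-sorted one. -/
def toSemi (i₀ : Fin n) (M : SortedAA A n) : SemiSortedAA A n where
  State := M.State
  fintype := M.fintype
  start := M.start
  accept := {M.final}
  step := M.step
  tape := fun s => (M.sort s).elim i₀ Prod.fst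

lemma toSemi_tape {i₀ : Fin n} (M : SortedAA A n) {s : M.State} {i : Fin n}
    {V : Finset (Fin n)} (hs : M.sort s = some (i, V)) :
    (M.toSemi i₀).tape s = i := by
  simp [toSemi, hs]

lemma run_to_semi {M : SortedAA A n} (i₀ : Fin n) {s r f} (h : M.Run s r f) :
    (M.toSemi i₀).Run s r f := by
  induction h with
  | nil s => exact SemiSortedAA.Run.nil (M := M.toSemi i₀) s
  | @step s t f c rest r i V hs h hr hrun ih =>
      have ht : (M.toSemi i₀).tape s = i := toSemi_tape M hs
      refine SemiSortedAA.Run.step (M := M.toSemi i₀) (t := t) (rest := rest)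
        (show (M.toSemi i₀).step s c = some t from h) ?_ ?_
      · rw [ht]; exact hr
      · rw [ht]; exact ih

lemma semi_to_run {M : SortedAA A n} {i₀ : Fin n} {s r f}
    (h : (M.toSemi i₀).Run s r f) : M.Run s r f := by
  induction h with
  | nil s => exact .nil s
  | @step s t f c rest r h hr hrun ih =>
      have hstep : M.step s c = some t := h
      have hsne : s ≠ M.final := by
        rintro rfl
        rw [M.step_final] at hstep
        exact nomatch hstep
      obtain ⟨p, hp⟩ : ∃ p, M.sort s = some p := by
        cases hso : M.sort s with
        | none => exact absurd ((M.sort_final s).1 hso) hsne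
        | some p => exact ⟨p, rfl⟩
      obtain ⟨i, V⟩ := p
      have ht : (M.toSemi i₀).tape s = i := toSemi_tape M hp
      rw [ht] at hr ih
      exact SortedAA.Run.step hp hstep hr ih

end SortedAA

namespace SemiSortedAA

lemma run_empty_eq {M : SemiSortedAA A n} {s r f} (h : M.Run s r f)
    (hr : r = fun _ => []) : f = s := by
  cases h with
  | nil => rfl
  | step h hrr hrun => rw [hr] at hrr; simp at hrr

lemma run_tape_ne {M : SemiSortedAA A n} {s r f} (h : M.Run s r f)
    (hne : r ≠ fun _ => []) : r (M.tape s) ≠ [] := by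
  cases h with
  | nil => exact absurd rfl hne
  | step h hrr hrun => rw [hrr]; simp

/-- The transition function of the sorted automaton built from a semi-sorted one. -/
noncomputable def sstep (M : SemiSortedAA A n) :
    (M.State × Finset (Fin n)) ⊕ Unit → Option A →
      Option ((M.State × Finset (Fin n)) ⊕ Unit)
  | .inr _, _ => none
  | .inl (s, V), some a =>
      if M.tape s ∈ V then none else
      (M.step s (some a)).bind fun t =>
        if M.tape t ∈ V then none else some (.inl (t, V))
  | .inl (s, V), none =>
      if M.tape s ∈ V then none else
      (M.step s none).bind fun t =>
        if insert (M.tape s) V = (Finset.univ : Finset (Fin n)) then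
          (if t ∈ M.accept then some (.inr ()) else none)
        else if M.tape t ∈ insert (M.tape s) V then none
        else some (.inl (t, insert (M.tape s) V))

/-- The sorted automaton built from a semi-sorted one, tracking the set of
finished tapes. -/
noncomputable def toSorted (M : SemiSortedAA A n) : SortedAA A n where
  State := (M.State × Finset (Fin n)) ⊕ Unit
  fintype := by have := M.fintype; infer_instance
  start := .inl (M.start, ∅)
  final := .inr ()
  step := M.sstep
  sort := fun s' => match s' with
    | .inr _ => none
    | .inl (s, V) => some (M.tape s, V.erase (M.tape s))
  sort_final := by
    rintro (⟨s, V⟩ | u)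
    · simp
    · cases u; simp
  sort_mem := by
    rintro (⟨s, V⟩ | u) i W h
    · simp only [Option.some.injEq, Prod.mk.injEq] at h
      obtain ⟨rfl, rfl⟩ := h
      exact Finset.notMem_erase _ _
    · simp at h
  start_sort := ⟨M.tape M.start, by simp⟩
  step_final := fun c => rfl
  dollar_step := by
    rintro (⟨s, V⟩ | u) t' h
    · simp only [sstep] at h
      by_cases hiV : M.tape s ∈ V
      · rw [if_pos hiV] at h; exact absurd h (by simp)
      rw [if_neg hiV] at h
      refine ⟨M.tape s, V.erase (M.tape s), by simp, ?_⟩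
      rw [Finset.erase_eq_of_notMem hiV]
      cases hst : M.step s none with
      | none => rw [hst] at h; exact absurd h (by simp)
      | some t =>
        rw [hst, Option.bind_some] at h
        by_cases hU : insert (M.tape s) V = (Finset.univ : Finset (Fin n))
        · rw [if_pos hU] at h
          by_cases hta : t ∈ M.accept
          · rw [if_pos hta] at h
            left
            exact ⟨hU, (Option.some.inj h).symm⟩
          · rw [if_neg hta] at h; exact absurd h (by simp)
        · rw [if_neg hU] at h
          by_cases htV : M.tape t ∈ insert (M.tape s) V
          · rw [if_pos htV] at h; exact absurd h (by simp)
          rw [if_neg htV] at h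
          have ht' : t' = .inl (t, insert (M.tape s) V) := (Option.some.inj h).symm
          right
          refine ⟨M.tape t, (insert (M.tape s) V).erase (M.tape t), ?_, ?_, ?_⟩
          · rw [ht']
          · intro hc; exact htV (hc ▸ Finset.mem_insert_self _ _)
          · exact Finset.erase_eq_of_notMem htV
    · exact absurd h (by simp [sstep])
  letter_step := by
    rintro (⟨s, V⟩ | u) t' a h
    · simp only [sstep] at h
      by_cases hiV : M.tape s ∈ V
      · rw [if_pos hiV] at h; exact absurd h (by simp)
      rw [if_neg hiV] at h
      cases hst : M.step s (some a) with
      | none => rw [hst] at h; exact absurd h (by simp)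
      | some t =>
        rw [hst, Option.bind_some] at h
        by_cases htV : M.tape t ∈ V
        · rw [if_pos htV] at h; exact absurd h (by simp)
        rw [if_neg htV] at h
        have ht' : t' = .inl (t, V) := (Option.some.inj h).symm
        refine ⟨M.tape s, V.erase (M.tape s), M.tape t, by simp, ?_, ?_⟩
        · rw [ht']
          show some (M.tape t, V.erase (M.tape t)) = _
          rw [Finset.erase_eq_of_notMem htV, Finset.erase_eq_of_notMem hiV]
        · exact fun hc => htV (Finset.mem_of_mem_erase hc)
    · exact absurd h (by simp [sstep])

lemma toSorted_sort (M : SemiSortedAA A n) {s : M.State} {V : Finset (Fin n)}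
    (h : M.tape s ∉ V) :
    M.toSorted.sort (.inl (s, V)) = some (M.tape s, V) := by
  simp [toSorted, Finset.erase_eq_of_notMem h]

lemma toSorted_run_inr {M : SemiSortedAA A n} {r f'} :
    ∀ {s'}, M.toSorted.Run s' r f' → s' = .inr () → r = fun _ => [] := by
  intro s' h he
  cases h with
  | nil => rfl
  | step hs h hr hrun =>
      rw [he] at hs
      simp [toSorted] at hs

lemma toSorted_run {M : SemiSortedAA A n} :
    ∀ {s r f}, M.Run s r f → f ∈ M.accept →
      ∀ V : Finset (Fin n), (∀ i, r i = [] ↔ i ∈ V) →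
      (∀ i, r i = [] ∨ ∃ u : List A, r i = u.map some ++ [none]) →
      r ≠ (fun _ => []) →
      M.toSorted.Run (.inl (s, V)) r (.inr ()) := by
  intro s r f h hf
  induction h with
  | nil s => intro V hV hwf hne; exact absurd rfl hne
  | @step s t f c rest r h hr hrun ih =>
    intro V hV hwf hne
    have h0 : r (M.tape s) ≠ [] := by rw [hr]; simp
    have hiV : M.tape s ∉ V := fun hm => h0 ((hV _).2 hm)
    rcases hwf (M.tape s) with h1 | ⟨u, hu⟩
    · exact absurd h1 h0
    cases u with
    | nil =>
      have hcr : c :: rest = [none] := hr.symm.trans hu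
      simp only [List.cons.injEq] at hcr
      obtain ⟨rfl, rfl⟩ := hcr
      by_cases hU : insert (M.tape s) V = (Finset.univ : Finset (Fin n))
      · have hall : Function.update r (M.tape s) ([] : List (Option A)) = fun _ => [] := by
          funext j
          by_cases hj : j = M.tape s
          · subst hj; simp
          · rw [Function.update_of_ne hj]
            refine (hV j).2 ?_
            have : j ∈ insert (M.tape s) V := by rw [hU]; exact Finset.mem_univ j
            exact (Finset.mem_insert.1 this).resolve_left hj
        have hft : f = t := run_empty_eq hrun hall
        have hta : t ∈ M.accept := hft ▸ hf
        refine SortedAA.Run.step (t := Sum.inr ()) (M.toSorted_sort hiV) ?_ hr ?_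
        · rw [show M.toSorted.step = M.sstep from rfl]
          simp only [sstep]
          rw [if_neg hiV, h, Option.bind_some, if_pos hU, if_pos hta]; rfl
        · rw [hall]
          exact SortedAA.Run.nil _
      · obtain ⟨j, hj⟩ : ∃ j, j ∉ insert (M.tape s) V := by
          by_contra hc; push_neg at hc
          exact hU (Finset.eq_univ_iff_forall.2 hc)
        rw [Finset.mem_insert] at hj; push_neg at hj
        have hne' : Function.update r (M.tape s) ([] : List (Option A)) ≠ fun _ => [] := by
          intro hc
          have := congrFun hc j
          rw [Function.update_of_ne hj.1] at this
          exact ((hV j).not.2 hj.2) this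
        have hV' : ∀ k, Function.update r (M.tape s) ([] : List (Option A)) k = [] ↔
            k ∈ insert (M.tape s) V := by
          intro k
          by_cases hk : k = M.tape s
          · subst hk; simp
          · rw [Function.update_of_ne hk, Finset.mem_insert]
            exact (hV k).trans (by simp [hk])
        have htape : M.tape t ∉ insert (M.tape s) V := by
          intro hm
          exact run_tape_ne hrun hne' ((hV' _).2 hm)
        refine SortedAA.Run.step (t := Sum.inl (t, insert (M.tape s) V))
          (M.toSorted_sort hiV) ?_ hr ?_
        · rw [show M.toSorted.step = M.sstep from rfl]
          simp only [sstep]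
          rw [if_neg hiV, h, Option.bind_some, if_neg hU, if_neg htape]; rfl
        · refine ih hf _ hV' ?_ hne'
          intro k
          by_cases hk : k = M.tape s
          · subst hk; left; simp
          · rw [Function.update_of_ne hk]; exact hwf k
    | cons a u' =>
      have hcr : c :: rest = some a :: (u'.map some ++ [none]) := by
        rw [← hr, hu]; simp
      simp only [List.cons.injEq] at hcr
      obtain ⟨rfl, rfl⟩ := hcr
      have hrest : (u'.map some ++ [none] : List (Option A)) ≠ [] := by simp
      have hne' : Function.update r (M.tape s) (u'.map some ++ [none]) ≠ fun _ => [] := by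
        intro hc
        have := congrFun hc (M.tape s)
        rw [Function.update_self] at this
        exact hrest this
      have hV' : ∀ k, Function.update r (M.tape s) (u'.map some ++ [none]) k = [] ↔
          k ∈ V := by
        intro k
        by_cases hk : k = M.tape s
        · subst hk
          rw [Function.update_self]
          exact iff_of_false hrest hiV
        · rw [Function.update_of_ne hk]; exact hV k
      have htape : M.tape t ∉ V := by
        intro hm
        exact run_tape_ne hrun hne' ((hV' _).2 hm)
      refine SortedAA.Run.step (t := Sum.inl (t, V)) (M.toSorted_sort hiV) ?_ hr ?_
      · rw [show M.toSorted.step = M.sstep from rfl]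
        simp only [sstep]
        rw [if_neg hiV, h, Option.bind_some, if_neg htape]; rfl
      · refine ih hf _ hV' ?_ hne'
        intro k
        by_cases hk : k = M.tape s
        · subst hk; right; exact ⟨u', by rw [Function.update_self]⟩
        · rw [Function.update_of_ne hk]; exact hwf k

lemma toSorted_run_rev {M : SemiSortedAA A n} :
    ∀ {s' r f'}, M.toSorted.Run s' r f' →
      ∀ s V, s' = .inl (s, V) → f' = .inr () →
      ∃ f ∈ M.accept, M.Run s r f := by
  intro s' r f' h
  induction h with
  | nil s' =>
      intro s V h1 h2
      rw [h1] at h2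
      simp at h2
  | @step s' t' f' c rest r i V₀ hs h hr hrun ih =>
    intro s V hse hfe
    subst hse; subst hfe
    have hi : i = M.tape s := by
      simp only [toSorted, Option.some.injEq, Prod.mk.injEq] at hs
      exact hs.1.symm
    subst hi
    have hstep : M.sstep (.inl (s, V)) c = some t' := h
    cases c with
    | some a =>
      simp only [sstep] at hstep
      by_cases hiV : M.tape s ∈ V
      · rw [if_pos hiV] at hstep; exact absurd hstep (by simp)
      rw [if_neg hiV] at hstep
      cases hst : M.step s (some a) with
      | none => rw [hst] at hstep; exact absurd hstep (by simp)
      | some t =>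
        rw [hst, Option.bind_some] at hstep
        by_cases htV : M.tape t ∈ V
        · rw [if_pos htV] at hstep; exact absurd hstep (by simp)
        rw [if_neg htV] at hstep
        have ht' : t' = .inl (t, V) := (Option.some.inj hstep).symm
        obtain ⟨f, hfa, hfr⟩ := ih t V ht' rfl
        exact ⟨f, hfa, SemiSortedAA.Run.step hst hr hfr⟩
    | none =>
      simp only [sstep] at hstep
      by_cases hiV : M.tape s ∈ V
      · rw [if_pos hiV] at hstep; exact absurd hstep (by simp)
      rw [if_neg hiV] at hstep
      cases hst : M.step s none with
      | none => rw [hst] at hstep; exact absurd hstep (by simp)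
      | some t =>
        rw [hst, Option.bind_some] at hstep
        by_cases hU : insert (M.tape s) V = (Finset.univ : Finset (Fin n))
        · rw [if_pos hU] at hstep
          by_cases hta : t ∈ M.accept
          · rw [if_pos hta] at hstep
            have ht' : t' = .inr () := (Option.some.inj hstep).symm
            have hall : Function.update r (M.tape s) rest = fun _ => [] :=
              toSorted_run_inr hrun ht'
            refine ⟨t, hta, SemiSortedAA.Run.step hst hr ?_⟩
            rw [hall]
            exact SemiSortedAA.Run.nil t
          · rw [if_neg hta] at hstep; exact absurd hstep (by simp)
        · rw [if_neg hU] at hstep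
          by_cases htV : M.tape t ∈ insert (M.tape s) V
          · rw [if_pos htV] at hstep; exact absurd hstep (by simp)
          rw [if_neg htV] at hstep
          have ht' : t' = .inl (t, insert (M.tape s) V) := (Option.some.inj hstep).symm
          obtain ⟨f, hfa, hfr⟩ := ih t _ ht' rfl
          exact ⟨f, hfa, SemiSortedAA.Run.step hst hr hfr⟩

end SemiSortedAA

end AuxProof

/-- Sorted and semi-sorted asynchronous automata accept the same class of languages:
an `n`-variable language over a finite alphabet is accepted by some `n`-tape sorted
asynchronous automaton iff it is accepted by some `n`-tape semi-sorted asynchronous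
automaton. -/
theorem sorted_iff_semiSorted {A : Type} [Fintype A] {n : ℕ} (hn : 1 ≤ n)
    (L : Set (Fin n → List A)) :
    (∃ M : SortedAA A n, ∀ w, w ∈ L ↔ M.Accepts w) ↔
      (∃ M : SemiSortedAA A n, ∀ w, w ∈ L ↔ M.Accepts w) := by
  constructor
  · rintro ⟨M, hM⟩
    refine ⟨M.toSemi ⟨0, hn⟩, fun w => (hM w).trans ?_⟩
    constructor
    · intro h
      exact ⟨M.final, rfl, SortedAA.run_to_semi _ h⟩
    · rintro ⟨f, hf, hrun⟩
      have hf' : f = M.final := hf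
      rw [hf'] at hrun
      exact SortedAA.semi_to_run hrun
  · rintro ⟨M, hM⟩
    refine ⟨M.toSorted, fun w => (hM w).trans ?_⟩
    constructor
    · rintro ⟨f, hf, hrun⟩
      show M.toSorted.Run (.inl (M.start, ∅)) _ (.inr ())
      refine SemiSortedAA.toSorted_run hrun hf ∅ (fun i => ?_) (fun i => ?_) ?_
      · simp
      · exact Or.inr ⟨w i, rfl⟩
      · intro hc
        have := congrFun hc ⟨0, hn⟩
        simp at this
    · intro h
      have h' : M.toSorted.Run (.inl (M.start, ∅)) _ (.inr ()) := h
      exact SemiSortedAA.toSorted_run_rev h' M.start ∅ rfl rfl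
end

section
/- Let L be an n-variable language over a finite alphabet A. The following are equivalent: (i) L is the language accepted by some n-tape non-deterministic filter asynchronous automaton (FAA) over A; (ii) L is the language accepted by some deterministic-filter asynchronous automaton (DFAA) over A; (iii) L is the language accepted by some n-tape non-deterministic semi-sorted asynchronous automaton (SAA) over A. -/
/-- An `n`-tape non-deterministic semi-sorted asynchronous automaton (SAA) over `A`:
a non-deterministic finite state automaton over `A ∪ {$}` (possibly with
`ε`-transitions and several start states; the padding symbol `$` is modelled by
`none : Option A`) together with a partition of its state set into `n` sets
(recorded by `tape`, where `tape s = i` means `s ∈ S_i`). -/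
structure SAA (A : Type) (n : ℕ) where
  State : Type
  fintype : Fintype State
  start : Set State
  accept : Set State
  /-- non-deterministic transitions labelled by letters of `A ∪ {$}` -/
  step : State → Option A → Set State
  /-- `ε`-transitions -/
  eps : State → Set State
  /-- the index `i` such that the state lies in `S_i` -/
  tape : State → Fin n

namespace SAA

variable {A : Type} {n : ℕ}

/-- Runs of a non-deterministic semi-sorted asynchronous automaton: `M.Run s r f`
means that starting at `s` with remaining content `r i` on the `i`-th tape, the
automaton can consume all the remaining content and end at `f`, reading from tape
`M.tape s` when in state `s` (this is the existence of an appropriate shuffle). -/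
inductive Run (M : SAA A n) :
    M.State → (Fin n → List (Option A)) → M.State → Prop
  | nil (s : M.State) : Run M s (fun _ => []) s
  | eps {s t f : M.State} {r : Fin n → List (Option A)}
      (h : t ∈ M.eps s) (hrun : Run M t r f) : Run M s r f
  | step {s t f : M.State} {c : Option A} {rest : List (Option A)}
      {r : Fin n → List (Option A)}
      (h : t ∈ M.step s c)
      (hr : r (M.tape s) = c :: rest)
      (hrun : Run M t (Function.update r (M.tape s) rest) f) :
      Run M s r f

/-- The SAA accepts `(w 1, …, w n)` if some shuffle of `(w 1 $, …, w n $)` labels a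
path from a start state to an accept state, each letter from the `i`-th word being
read while the automaton is in a state of `S_i`. -/
def Accepts (M : SAA A n) (w : Fin n → List A) : Prop :=
  ∃ s₀ ∈ M.start, ∃ f ∈ M.accept,
    M.Run s₀ (fun i => (w i).map some ++ [none]) f

end SAA

/-- An `n`-variable language is weakly regular if it is the language accepted by some
`n`-tape non-deterministic semi-sorted asynchronous automaton. -/
def IsWeaklyRegular {A : Type} {n : ℕ} (L : Set (Fin n → List A)) : Prop :=
  ∃ M : SAA A n, ∀ w, w ∈ L ↔ M.Accepts w

/-- An `n`-tape non-deterministic filter asynchronous automaton (FAA) over `A`.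
Letters of the padded alphabet `A^$` are tuples `Fin n → Option A`, with `none`
the padding symbol `$`.  The transition function `Δ : S × A^$ → P(S) × E` is split
into its two components `next` and `filters`. -/
structure FAA (A : Type) (n : ℕ) where
  State : Type
  fintype : Fintype State
  start : Set State
  accept : Set State
  /-- the set of possible next states -/
  next : State → (Fin n → Option A) → Set State
  /-- the set of possible filters -/
  filters : State → (Fin n → Option A) → Set (Finset (Fin n))
  /-- filters are nonempty subsets of `{1, …, n}` -/
  filters_nonempty : ∀ s σ, ∀ χ ∈ filters s σ, χ.Nonempty
  /-- if `σ i = $` and the state set of `Δ(s, σ)` is nonempty,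
  then `i` belongs to no filter of `Δ(s, σ)` -/
  pad : ∀ s σ (i : Fin n), σ i = none → (next s σ).Nonempty →
    ∀ χ ∈ filters s σ, i ∉ χ

namespace FAA

variable {A : Type} {n : ℕ}

/-- Runs of an FAA: `r i` is the unread suffix of the `i`-th tape, so the current
letter on tape `i` is its head (or `$` once past the end of the tape); one chooses
a filter and a next state from the transition function and advances by one position
exactly the tapes whose index lies in the filter.  `M.Run s r f` means that
starting at `s` the automaton can read every tape to its end and terminate at `f`. -/
inductive Run (M : FAA A n) : M.State → (Fin n → List A) → M.State → Prop
  | nil (s : M.State) : Run M s (fun _ => []) s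
  | step {s t f : M.State} {r : Fin n → List A} {χ : Finset (Fin n)}
      (ht : t ∈ M.next s fun i => (r i).head?)
      (hχ : χ ∈ M.filters s fun i => (r i).head?)
      (hrun : Run M t (fun i => if i ∈ χ then (r i).tail else r i) f) :
      Run M s r f

/-- Acceptance for FAAs: some run starts in a start state, reads every tape to its
end, and terminates in an accept state. -/
def Accepts (M : FAA A n) (w : Fin n → List A) : Prop :=
  ∃ s₀ ∈ M.start, ∃ f ∈ M.accept, M.Run s₀ w f

/-- A deterministic-filter asynchronous automaton (DFAA) is an FAA in which, in any
given state and for any input letter, there is at most one possible filter. -/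
def IsDeterministicFilter (M : FAA A n) : Prop :=
  ∀ s σ, (M.filters s σ).Subsingleton

end FAA
namespace FAA

variable {A : Type} {n : ℕ}

/-- Determinize the filters of an FAA by storing the next filter in the state. -/
def detFilter (M : FAA A n) : FAA A n where
  State := M.State × Finset (Fin n)
  fintype := letI := M.fintype; inferInstance
  start := {p | p.1 ∈ M.start}
  accept := {p | p.1 ∈ M.accept}
  next := fun p σ => {q | p.2 ∈ M.filters p.1 σ ∧ q.1 ∈ M.next p.1 σ}
  filters := fun p σ => {χ | χ = p.2 ∧ p.2 ∈ M.filters p.1 σ ∧ (M.next p.1 σ).Nonempty}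
  filters_nonempty := by
    rintro ⟨s, χ⟩ σ χ' ⟨rfl, h, -⟩
    exact M.filters_nonempty s σ _ h
  pad := by
    rintro ⟨s, χ⟩ σ i hi - χ' ⟨rfl, h, hne⟩
    exact M.pad s σ i hi hne _ h

theorem detFilter_isDeterministicFilter (M : FAA A n) :
    M.detFilter.IsDeterministicFilter := by
  rintro ⟨s, χ⟩ σ χ₁ ⟨rfl, -, -⟩ χ₂ ⟨rfl, -, -⟩
  rfl

theorem detFilter_run_of {M : FAA A n} {s f : M.State} {r : Fin n → List A}
    (h : M.Run s r f) (χe : Finset (Fin n)) :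
    ∃ χ₀, M.detFilter.Run (s, χ₀) r (f, χe) := by
  induction h generalizing χe with
  | nil s => exact ⟨χe, Run.nil _⟩
  | @step s t f r χ ht hχ hrun ih =>
    obtain ⟨χ₀', hr'⟩ := ih χe
    exact ⟨χ, Run.step (M := M.detFilter) (t := (t, χ₀')) (χ := χ)
      ⟨hχ, ht⟩ ⟨rfl, hχ, ⟨t, ht⟩⟩ hr'⟩

theorem run_of_detFilter_run {M : FAA A n} {p q : M.detFilter.State}
    {r : Fin n → List A} (h : M.detFilter.Run p r q) : M.Run p.1 r q.1 := by
  induction h with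
  | nil s => exact Run.nil _
  | @step s t f r χ ht hχ hrun ih =>
    obtain ⟨rfl, hχ', -⟩ := hχ
    exact Run.step ht.2 ht.1 ih

theorem detFilter_accepts (M : FAA A n) (w : Fin n → List A) :
    M.Accepts w ↔ M.detFilter.Accepts w := by
  constructor
  · rintro ⟨s₀, hs₀, f, hf, hrun⟩
    obtain ⟨χ₀, hr⟩ := detFilter_run_of hrun ∅
    exact ⟨(s₀, χ₀), hs₀, (f, ∅), hf, hr⟩
  · rintro ⟨⟨s₀, χ₀⟩, hs₀, ⟨f, χe⟩, hf, hrun⟩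
    exact ⟨s₀, hs₀, f, hf, run_of_detFilter_run hrun⟩

end FAA
namespace SAA

variable {A : Type} {n : ℕ}

/-- Closure moves of an SAA relative to the exhaustion pattern `σ`: `ε`-moves and
reads of the padding symbol on tapes that are exhausted and whose `$` is unread. -/
inductive Reach (M : SAA A n) (σ : Fin n → Option A) :
    M.State × Finset (Fin n) → M.State × Finset (Fin n) → Prop
  | refl (p) : Reach M σ p p
  | eps {s : M.State} {D : Finset (Fin n)} {t : M.State} {p}
      (h : t ∈ M.eps s) (h2 : Reach M σ (t, D) p) : Reach M σ (s, D) p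
  | dollar {s : M.State} {D : Finset (Fin n)} {t : M.State} {p}
      (h : t ∈ M.step s none) (hσ : σ (M.tape s) = none)
      (hD : M.tape s ∉ D) (h2 : Reach M σ (t, insert (M.tape s) D) p) :
      Reach M σ (s, D) p

theorem Reach.trans {M : SAA A n} {σ : Fin n → Option A}
    {p q r : M.State × Finset (Fin n)}
    (h1 : Reach M σ p q) (h2 : Reach M σ q r) : Reach M σ p r := by
  induction h1 with
  | refl => exact h2
  | eps h _ ih => exact Reach.eps h (ih h2)
  | dollar h hσ hD _ ih => exact Reach.dollar h hσ hD (ih h2)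

theorem Reach.mem_or {M : SAA A n} {σ : Fin n → Option A}
    {p q : M.State × Finset (Fin n)} (h : Reach M σ p q) :
    ∀ j ∈ q.2, j ∈ p.2 ∨ σ j = none := by
  induction h with
  | refl => exact fun j hj => Or.inl hj
  | eps h _ ih => exact ih
  | @dollar s D t _ h hσ hD _ ih =>
    intro j hj
    rcases ih j hj with hj' | hj'
    · rcases Finset.mem_insert.1 hj' with rfl | hj''
      · exact Or.inr hσ
      · exact Or.inl hj''
    · exact Or.inr hj'

/-- The FAA simulating an SAA: states record the SAA state, the set of tapes whose
padding symbol has been consumed, and the tape to be read next. -/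
def toFAA (M : SAA A n) : FAA A n where
  State := M.State × Finset (Fin n) × Fin n
  fintype := letI := M.fintype; inferInstance
  start := {p | p.1 ∈ M.start ∧ p.2.1 = ∅}
  accept := {p | ∃ u, M.Reach (fun _ => none) (p.1, p.2.1) (u, Finset.univ) ∧
    u ∈ M.accept}
  next := fun p σ => {q | ∃ u D₁ a, M.Reach σ (p.1, p.2.1) (u, D₁) ∧
    M.tape u = p.2.2 ∧ σ p.2.2 = some a ∧ q.1 ∈ M.step u (some a) ∧ q.2.1 = D₁}
  filters := fun p σ => {χ | χ = {p.2.2} ∧ σ p.2.2 ≠ none}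
  filters_nonempty := by
    rintro p σ χ ⟨rfl, -⟩
    exact Finset.singleton_nonempty _
  pad := by
    rintro p σ i hi - χ ⟨rfl, hne⟩ hmem
    rw [Finset.mem_singleton] at hmem
    subst hmem
    exact hne hi

/-- The remaining padded contents, given unread real contents `r` and the set `D`
of tapes whose padding symbol has been consumed. -/
def rem (D : Finset (Fin n)) (r : Fin n → List A) : Fin n → List (Option A) :=
  fun j => (r j).map some ++ if j ∈ D then [] else [none]

theorem run_of_reach {M : SAA A n} {p q : M.State × Finset (Fin n)}
    {r : Fin n → List A} {g : M.State}
    (h : M.Reach (fun j => (r j).head?) p q)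
    (hrun : M.Run q.1 (rem q.2 r) g) : M.Run p.1 (rem p.2 r) g := by
  induction h with
  | refl p => exact hrun
  | eps h _ ih => exact Run.eps h (ih hrun)
  | @dollar s₀ D₀ t _ h hσ hD _ ih =>
    have hr0 : r (M.tape s₀) = [] := by
      simpa using List.head?_eq_none_iff.1 hσ
    refine Run.step (c := none) (rest := []) h ?_ ?_
    · simp [rem, hr0, hD]
    · have : Function.update (rem D₀ r) (M.tape s₀) ([] : List (Option A)) =
          rem (insert (M.tape s₀) D₀) r := by
        funext k
        rcases eq_or_ne k (M.tape s₀) with rfl | hk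
        · simp [rem, hr0]
        · simp [Function.update_apply, hk, rem, Finset.mem_insert, hk]
      rw [this]
      exact ih hrun

theorem toFAA_sound {M : SAA A n} {p f : M.toFAA.State} {r : Fin n → List A}
    (h : M.toFAA.Run p r f) (hf : f ∈ M.toFAA.accept)
    (hD : ∀ j ∈ p.2.1, r j = []) :
    ∃ g ∈ M.accept, M.Run p.1 (rem p.2.1 r) g := by
  induction h with
  | nil s =>
    obtain ⟨u, hreach, hu⟩ := hf
    refine ⟨u, hu, ?_⟩
    have hbase : M.Run u (rem Finset.univ (fun _ => ([] : List A))) u := by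
      have : rem (n := n) Finset.univ (fun _ => ([] : List A)) = fun _ => [] := by
        funext k; simp [rem]
      rw [this]; exact Run.nil u
    have hreach' : M.Reach (fun j => (((fun _ => []) : Fin n → List A) j).head?)
        (s.1, s.2.1) (u, Finset.univ) := hreach
    exact run_of_reach (p := (s.1, s.2.1)) (q := (u, Finset.univ)) hreach' hbase
  | @step p t f r χ ht hχ hrun ih =>
    obtain ⟨rfl, hne⟩ := hχ
    obtain ⟨u, D₁, a, hreach, htape, hσi, hstep, hD₁⟩ := ht
    have hσi' : (r p.2.2).head? = some a := hσi
    have hri : r p.2.2 ≠ [] := by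
      intro h0; rw [h0] at hσi'; simp at hσi'
    obtain ⟨b, tl, hrb⟩ := List.exists_cons_of_ne_nil hri
    have hab : a = b := by
      rw [hrb] at hσi'; simpa using hσi'.symm
    subst hab
    have hD' : ∀ j ∈ t.2.1, (if j ∈ ({p.2.2} : Finset (Fin n)) then (r j).tail
        else r j) = [] := by
      intro j hj
      rw [hD₁] at hj
      rcases hreach.mem_or j hj with hj' | hj'
      · have : r j = [] := hD j hj'
        have hji : j ≠ p.2.2 := by rintro rfl; exact hri this
        simpa [hji] using this
      · have : r j = [] := by simpa using List.head?_eq_none_iff.1 hj'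
        have hji : j ≠ p.2.2 := by rintro rfl; exact hri this
        simpa [hji] using this
    obtain ⟨g, hg, hrt⟩ := ih hf hD'
    refine ⟨g, hg, ?_⟩
    have hmid : M.Run u (rem D₁ r) g := by
      refine Run.step (c := some a) (rest := tl.map some ++
          if p.2.2 ∈ D₁ then [] else [none]) (by exact hstep) ?_ ?_
      · rw [htape]; simp [rem, hrb]
      · rw [htape]
        have : Function.update (rem D₁ r) p.2.2
            (tl.map some ++ if p.2.2 ∈ D₁ then [] else [none]) =
            rem D₁ (fun i => if i ∈ ({p.2.2} : Finset (Fin n)) then (r i).tail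
              else r i) := by
          funext k
          rcases eq_or_ne k p.2.2 with rfl | hk
          · simp [rem, hrb]
          · simp [Function.update_apply, hk, rem]
        rw [this]
        rw [hD₁] at hrt
        exact hrt
    exact run_of_reach (p := (p.1, p.2.1)) (q := (u, D₁)) hreach hmid
theorem toFAA_prepend {M : SAA A n} {s t : M.State} {D D' : Finset (Fin n)}
    {i : Fin n} {r : Fin n → List A} {f : M.toFAA.State}
    (hreach : M.Reach (fun j => (r j).head?) (s, D) (t, D'))
    (hrun : M.toFAA.Run (t, D', i) r f) (hf : f ∈ M.toFAA.accept) :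
    ∃ f', M.toFAA.Run (s, D, i) r f' ∧ f' ∈ M.toFAA.accept := by
  rcases hrun with _ | @⟨_, t₂, _, _, χ, ht, hχ, hrun2⟩
  · refine ⟨(s, D, i), FAA.Run.nil _, ?_⟩
    obtain ⟨u, hreach2, hu⟩ := hf
    have hreach' : M.Reach (fun _ => none) (s, D) (t, D') := hreach
    exact ⟨u, hreach'.trans hreach2, hu⟩
  · obtain ⟨u, D₁, a, hreach2, htape, hσ, hstep, hD₁⟩ := ht
    refine ⟨f, ?_, hf⟩
    exact FAA.Run.step (t := t₂) ⟨u, D₁, a, hreach.trans hreach2, htape, hσ,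
      hstep, hD₁⟩ hχ hrun2

theorem toFAA_complete {M : SAA A n} {s g : M.State} {R : Fin n → List (Option A)}
    (h : M.Run s R g) (hg : g ∈ M.accept) (i₀ : Fin n) :
    ∀ (D : Finset (Fin n)) (r : Fin n → List A), (∀ j, R j = rem D r j) →
    ∃ i f, M.toFAA.Run (s, D, i) r f ∧ f ∈ M.toFAA.accept := by
  induction h with
  | nil s =>
    intro D r hR
    have hr : ∀ j, r j = [] ∧ j ∈ D := by
      intro j
      have := (hR j).symm
      by_cases hj : j ∈ D
      · simp [rem, hj] at this
        exact ⟨this, hj⟩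
      · simp [rem, hj] at this
    have hrnil : r = fun _ => [] := funext fun j => (hr j).1
    have hDuniv : D = Finset.univ := Finset.eq_univ_iff_forall.2 fun j => (hr j).2
    subst hrnil; subst hDuniv
    exact ⟨i₀, (s, Finset.univ, i₀), FAA.Run.nil _,
      ⟨s, Reach.refl _, hg⟩⟩
  | @eps s t _ R h hrun ih =>
    intro D r hR
    obtain ⟨i, f, hfr, hf⟩ := ih hg D r hR
    obtain ⟨f', hfr', hf'⟩ := toFAA_prepend (Reach.eps h (Reach.refl _)) hfr hf
    exact ⟨i, f', hfr', hf'⟩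
  | @step s t _ c rest R h hr hrun ih =>
    intro D r hR
    set j := M.tape s with hj
    cases c with
    | none =>
      have hRj : rem D r j = none :: rest := (hR j) ▸ hr
      have hrj : r j = [] := by
        by_cases hjD : j ∈ D
        · simp [rem, hjD] at hRj
          cases hx : r j with
          | nil => rfl
          | cons a l => rw [hx] at hRj; simp at hRj
        · cases hx : r j with
          | nil => rfl
          | cons a l => rw [rem, hx] at hRj; simp [hjD] at hRj
      have hjD : j ∉ D := by
        intro hjD
        rw [rem, hrj] at hRj
        simp [hjD] at hRj
      have hrest : rest = [] := by
        rw [rem, hrj] at hRj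
        simp [hjD] at hRj
        exact hRj
      have hR' : ∀ k, Function.update R j rest k = rem (insert j D) r k := by
        intro k
        rcases eq_or_ne k j with rfl | hk
        · simp [hrest, rem, hrj]
        · simp [Function.update_apply, hk, hR k, rem, Finset.mem_insert, hk]
      obtain ⟨i, f, hfr, hf⟩ := ih hg (insert j D) r hR'
      obtain ⟨f', hfr', hf'⟩ := toFAA_prepend
        (Reach.dollar h (by simpa using List.head?_eq_none_iff.2 hrj) hjD
          (Reach.refl _)) hfr hf
      exact ⟨i, f', hfr', hf'⟩
    | some a =>
      have hRj : rem D r j = some a :: rest := (hR j) ▸ hr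
      obtain ⟨tl, hrj⟩ : ∃ tl, r j = a :: tl := by
        cases hx : r j with
        | nil =>
          rw [rem, hx] at hRj
          by_cases hjD : j ∈ D <;> simp [hjD] at hRj
        | cons b l =>
          rw [rem, hx] at hRj
          simp at hRj
          exact ⟨l, by rw [hRj.1]⟩
      have hrest : rest = tl.map some ++ if j ∈ D then [] else [none] := by
        rw [rem, hrj] at hRj
        simpa using hRj.symm
      have hR' : ∀ k, Function.update R j rest k =
          rem D (fun k => if k ∈ ({j} : Finset (Fin n)) then (r k).tail
            else r k) k := by
        intro k
        rcases eq_or_ne k j with rfl | hk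
        · simp [hrest, rem, hrj]
        · simp [Function.update_apply, hk, hR k, rem]
      obtain ⟨i, f, hfr, hf⟩ := ih hg D _ hR'
      refine ⟨j, f, ?_, hf⟩
      have hσj : (fun k => (r k).head?) j = some a := by simp [hrj]
      exact FAA.Run.step (t := (t, D, i)) (χ := {j})
        ⟨s, D, a, Reach.refl _, hj.symm, hσj, h, rfl⟩
        ⟨rfl, by simp [hσj]⟩ hfr

theorem toFAA_accepts (M : SAA A n) (i₀ : Fin n) (w : Fin n → List A) :
    M.Accepts w ↔ M.toFAA.Accepts w := by
  constructor
  · rintro ⟨s₀, hs₀, g, hg, hrun⟩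
    obtain ⟨i, f, hfr, hf⟩ := toFAA_complete hrun hg i₀ ∅ w
      (fun j => by simp [rem])
    exact ⟨(s₀, ∅, i), ⟨hs₀, rfl⟩, f, hf, hfr⟩
  · rintro ⟨⟨s₀, D, i⟩, ⟨hs₀, hD⟩, f, hf, hrun⟩
    subst hD
    obtain ⟨g, hg, hrun'⟩ := toFAA_sound hrun hf (by simp)
    refine ⟨s₀, hs₀, g, hg, ?_⟩
    have : rem (∅ : Finset (Fin n)) w = fun i => (w i).map some ++ [none] := by
      funext k; simp [rem]
    exact this ▸ hrun'

end SAA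
namespace FAA

variable {A : Type} {n : ℕ}

/-- States of the SAA simulating an FAA: `ready s c` holds the FAA state `s` and
the current commitments `c` about the next padded letter of each tape; `reading`
states consume, one at a time, the letters promised by the guessed tuple `σ` on
the tapes of the chosen filter `χ`; `finish` states consume the padding symbols
at the end of every tape; `done` is the unique accept state. -/
inductive SimState (S : Type) (A : Type) (n : ℕ) where
  | ready (s : S) (c : Fin n → Option (Option A))
  | reading (t : S) (c : Fin n → Option (Option A)) (σ : Fin n → Option A)
      (χ : Finset (Fin n)) (j : Fin n)
  | finish (D : Finset (Fin n)) (j : Fin n)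
  | done
  deriving DecidableEq

instance simStateFintype (S A : Type) (n : ℕ) [Fintype S] [Fintype A]
    [DecidableEq S] [DecidableEq A] : Fintype (SimState S A n) := by
  classical
  let e : SimState S A n ≃
      (S × (Fin n → Option (Option A))) ⊕
      (S × (Fin n → Option (Option A)) × (Fin n → Option A) ×
        Finset (Fin n) × Fin n) ⊕
      (Finset (Fin n) × Fin n) ⊕ Unit :=
    { toFun := fun q => match q with
        | .ready s c => Sum.inl (s, c)
        | .reading t c σ χ j => Sum.inr (Sum.inl (t, c, σ, χ, j))
        | .finish D j => Sum.inr (Sum.inr (Sum.inl (D, j)))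
        | .done => Sum.inr (Sum.inr (Sum.inr ()))
      invFun := fun q => match q with
        | Sum.inl (s, c) => .ready s c
        | Sum.inr (Sum.inl (t, c, σ, χ, j)) => .reading t c σ χ j
        | Sum.inr (Sum.inr (Sum.inl (D, j))) => .finish D j
        | Sum.inr (Sum.inr (Sum.inr ())) => .done
      left_inv := fun q => by cases q <;> rfl
      right_inv := fun q => by rcases q with _ | (_ | (_ | ⟨⟩)) <;> rfl }
  exact Fintype.ofEquiv _ e.symm

/-- The SAA simulating an FAA. -/
noncomputable def toSAA [Fintype A] (M : FAA A n) (i₀ : Fin n) : SAA A n where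
  State := SimState M.State A n
  fintype := letI := M.fintype; letI : DecidableEq M.State := Classical.decEq _
    letI : DecidableEq A := Classical.decEq _
    simStateFintype _ _ _
  start := {q | ∃ s ∈ M.start, q = .ready s (fun _ => none)}
  accept := {q | q = .done}
  tape := fun q => match q with
    | .ready _ _ => i₀
    | .reading _ _ _ _ j => j
    | .finish _ j => j
    | .done => i₀
  eps := fun q => match q with
    | .ready s c =>
        {q' | ∃ (σ : Fin n → Option A) (χ : Finset (Fin n)) (t : M.State)
            (j : Fin n), (∀ k x, c k = some x → σ k = x) ∧ χ ∈ M.filters s σ ∧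
            t ∈ M.next s σ ∧ j ∈ χ ∧
            q' = .reading t (fun k => if k ∈ χ then none else some (σ k)) σ χ j}
          ∪ {q' | ∃ j : Fin n, s ∈ M.accept ∧
            (∀ k a, c k ≠ some (some a)) ∧ q' = .finish ∅ j}
    | _ => ∅
  step := fun q x => match q with
    | .reading t c σ χ j =>
        {q' | j ∈ χ ∧ (∃ a, x = some a ∧ σ j = some a) ∧
          ((∃ j' ∈ χ.erase j, q' = .reading t c σ (χ.erase j) j') ∨
            (χ.erase j = ∅ ∧ q' = .ready t c))}
    | .finish D j =>
        {q' | x = none ∧ j ∉ D ∧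
          ((∃ j', j' ∉ insert j D ∧ q' = .finish (insert j D) j') ∨
            (insert j D = Finset.univ ∧ q' = .done))}
    | _ => ∅

end FAA
namespace FAA

variable {A : Type} {n : ℕ}

theorem toSAA_tape_finish [Fintype A] (M : FAA A n) (i₀ : Fin n)
    (D : Finset (Fin n)) (j : Fin n) :
    (M.toSAA i₀).tape (SimState.finish D j) = j := rfl

theorem toSAA_tape_reading [Fintype A] (M : FAA A n) (i₀ : Fin n) (t : M.State)
    (c : Fin n → Option (Option A)) (σ : Fin n → Option A)
    (χ : Finset (Fin n)) (j : Fin n) :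
    (M.toSAA i₀).tape (SimState.reading t c σ χ j) = j := rfl

theorem finish_run [Fintype A] (M : FAA A n) (i₀ : Fin n) :
    ∀ (m : ℕ) (D : Finset (Fin n)) (j : Fin n), (Finset.univ \ D).card = m →
    j ∉ D →
    (M.toSAA i₀).Run (SimState.finish D j)
      (fun k => if k ∈ D then [] else [none]) SimState.done := by
  intro m
  induction m with
  | zero =>
    intro D j hm hj
    rw [Finset.card_eq_zero, Finset.sdiff_eq_empty_iff_subset] at hm
    exact absurd (hm (Finset.mem_univ j)) hj
  | succ m ih =>
    intro D j hm hj
    by_cases huniv : insert j D = Finset.univ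
    · refine SAA.Run.step (t := SimState.done) (c := none) (rest := [])
        ⟨rfl, hj, Or.inr ⟨huniv, rfl⟩⟩
        (by rw [toSAA_tape_finish]; simp [hj]) ?_
      rw [toSAA_tape_finish]
      have : Function.update (fun k => if k ∈ D then ([] : List (Option A))
          else [none]) j [] = fun _ => [] := by
        funext k
        rcases eq_or_ne k j with rfl | hk
        · simp
        · have : k ∈ D := by
            have := Finset.eq_univ_iff_forall.1 huniv k
            rcases Finset.mem_insert.1 this with h | h
            · exact absurd h hk
            · exact h
          simp [Function.update_apply, hk, this]
      rw [this]
      exact SAA.Run.nil _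
    · obtain ⟨j', hj'⟩ : ∃ j', j' ∉ insert j D := by
        by_contra hcon
        push_neg at hcon
        exact huniv (Finset.eq_univ_iff_forall.2 hcon)
      refine SAA.Run.step (t := SimState.finish (insert j D) j') (c := none)
        (rest := []) ⟨rfl, hj, Or.inl ⟨j', hj', rfl⟩⟩
        (by rw [toSAA_tape_finish]; simp [hj]) ?_
      rw [toSAA_tape_finish]
      have : Function.update (fun k => if k ∈ D then ([] : List (Option A))
          else [none]) j [] = fun k => if k ∈ insert j D then [] else [none] := by
        funext k
        rcases eq_or_ne k j with rfl | hk
        · simp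
        · simp [Function.update_apply, hk, Finset.mem_insert]
      rw [this]
      refine ih (insert j D) j' ?_ hj'
      have hcard : (Finset.univ \ insert j D).card =
          (Finset.univ \ D).card - 1 := by
        rw [Finset.sdiff_insert]
        rw [Finset.card_erase_of_mem (by simp [hj])]
      omega

theorem read_loop [Fintype A] (M : FAA A n) (i₀ : Fin n) (t : M.State)
    (c : Fin n → Option (Option A)) (σ : Fin n → Option A) :
    ∀ (m : ℕ) (χ' : Finset (Fin n)) (j : Fin n) (ρ : Fin n → List A),
    χ'.card = m → j ∈ χ' →
    (∀ k ∈ χ', σ k = (ρ k).head? ∧ σ k ≠ none) →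
    (M.toSAA i₀).Run (SimState.ready t c)
      (fun k => ((if k ∈ χ' then (ρ k).tail else ρ k).map some ++ [none]))
      SimState.done →
    (M.toSAA i₀).Run (SimState.reading t c σ χ' j)
      (fun k => ((ρ k).map some ++ [none])) SimState.done := by
  intro m
  induction m with
  | zero =>
    intro χ' j ρ hm hj _ _
    rw [Finset.card_eq_zero] at hm
    subst hm
    simp at hj
  | succ m ih =>
    intro χ' j ρ hm hj hheads hend
    obtain ⟨hσj, hσne⟩ := hheads j hj
    obtain ⟨a, ha⟩ := Option.ne_none_iff_exists'.1 hσne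
    obtain ⟨tl, hρj⟩ : ∃ tl, ρ j = a :: tl := by
      cases hx : ρ j with
      | nil => rw [hx] at hσj; rw [ha] at hσj; simp at hσj
      | cons b l =>
        rw [hx] at hσj; rw [ha] at hσj
        simp at hσj
        exact ⟨l, by rw [hσj]⟩
    have hupd : Function.update (fun k => ((ρ k).map some ++ [none]))
        j (tl.map some ++ [none]) =
        fun k => ((Function.update ρ j tl k).map some ++ [none]) := by
      funext k
      rcases eq_or_ne k j with rfl | hk
      · simp
      · simp [Function.update_apply, hk]
    by_cases herase : χ'.erase j = ∅
    · have hχ' : χ' = {j} := by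
        apply Finset.eq_singleton_iff_unique_mem.2
        refine ⟨hj, fun k hk => ?_⟩
        by_contra hkj
        exact (Finset.notMem_empty k) (herase ▸ Finset.mem_erase.2 ⟨hkj, hk⟩)
      refine SAA.Run.step (t := SimState.ready t c) (c := some a)
        (rest := tl.map some ++ [none])
        ⟨hj, ⟨a, rfl, ha⟩, Or.inr ⟨herase, rfl⟩⟩
        (by rw [toSAA_tape_reading]; simp [hρj]) ?_
      rw [toSAA_tape_reading, hupd]
      have : (fun k => ((Function.update ρ j tl k).map some ++ [none])) =
          (fun k => ((if k ∈ χ' then (ρ k).tail else ρ k).map some ++ [none])) := by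
        funext k
        rcases eq_or_ne k j with rfl | hk
        · simp [hχ', hρj]
        · simp [Function.update_apply, hk, hχ', hk]
      rw [this]
      exact hend
    · obtain ⟨j', hj'⟩ := Finset.nonempty_iff_ne_empty.2 herase
      refine SAA.Run.step (t := SimState.reading t c σ (χ'.erase j) j')
        (c := some a) (rest := tl.map some ++ [none])
        ⟨hj, ⟨a, rfl, ha⟩, Or.inl ⟨j', hj', rfl⟩⟩
        (by rw [toSAA_tape_reading]; simp [hρj]) ?_
      rw [toSAA_tape_reading, hupd]
      refine ih (χ'.erase j) j' (Function.update ρ j tl)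
        (by rw [Finset.card_erase_of_mem hj, hm]; rfl) hj' ?_ ?_
      · intro k hk
        have hkj : k ≠ j := (Finset.mem_erase.1 hk).1
        rw [Function.update_apply, if_neg hkj]
        exact hheads k (Finset.mem_erase.1 hk).2
      · have : (fun k => ((if k ∈ χ'.erase j then (Function.update ρ j tl k).tail
            else Function.update ρ j tl k).map some ++ [none])) =
            (fun k => ((if k ∈ χ' then (ρ k).tail else ρ k).map some ++ [none])) := by
          funext k
          rcases eq_or_ne k j with rfl | hk
          · simp [Finset.mem_erase, hj, hρj]
          · simp [Function.update_apply, hk, Finset.mem_erase, hk]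
        rw [this]
        exact hend

theorem toSAA_run [Fintype A] {M : FAA A n} (i₀ : Fin n) {s f : M.State}
    {r : Fin n → List A} (h : M.Run s r f) (hf : f ∈ M.accept) :
    ∀ c : Fin n → Option (Option A), (∀ k x, c k = some x → (r k).head? = x) →
    (M.toSAA i₀).Run (SimState.ready s c)
      (fun k => (r k).map some ++ [none]) SimState.done := by
  induction h with
  | nil s =>
    intro c hc
    refine SAA.Run.eps (t := SimState.finish ∅ i₀)
      (Or.inr ⟨i₀, hf, ?_, rfl⟩) ?_
    · intro k a hk
      have := hc k (some a) hk
      simp at this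
    · have : (fun k => (([] : List A)).map some ++ [none]) =
          (fun k => if k ∈ (∅ : Finset (Fin n)) then ([] : List (Option A))
            else [none]) := by
        funext k; simp
      rw [this]
      exact finish_run M i₀ _ ∅ i₀ rfl (by simp)
  | @step s t f r χ ht hχ hrun ih =>
    intro c hc
    obtain ⟨j₀, hj₀⟩ := M.filters_nonempty _ _ χ hχ
    set σ : Fin n → Option A := fun i => (r i).head? with hσ
    set c' : Fin n → Option (Option A) :=
      fun k => if k ∈ χ then none else some (σ k) with hc'
    refine SAA.Run.eps (t := SimState.reading t c' σ χ j₀)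
      (Or.inl ⟨σ, χ, t, j₀, fun k x hk => hc k x hk, hχ, ht, hj₀, rfl⟩) ?_
    refine read_loop M i₀ t c' σ χ.card χ j₀ r rfl hj₀ ?_ ?_
    · intro k hk
      refine ⟨rfl, fun hnone => ?_⟩
      exact M.pad s σ k hnone ⟨t, ht⟩ χ hχ hk
    · refine ih hf c' ?_
      intro k x hk
      rw [hc'] at hk
      by_cases hkχ : k ∈ χ
      · simp [hkχ] at hk
      · simp [hkχ] at hk
        subst hk
        simp [hkχ]; rfl

end FAA
namespace FAA

variable {A : Type} {n : ℕ}

theorem padded_head (l : List A) :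
    ((l.map some ++ [none] : List (Option A))).head? = some l.head? := by
  cases l <;> simp

/-- The induction invariant for soundness of `toSAA`. -/
def SimGoal (M : FAA A n) (q : SimState M.State A n)
    (R : Fin n → List (Option A)) : Prop :=
  match q with
  | .ready s c => ∀ ρ : Fin n → List A,
      (∀ k, R k = (ρ k).map some ++ [none]) →
      (∀ k x, c k = some x → (R k).head? = some x) ∧
        ∃ f ∈ M.accept, M.Run s ρ f
  | .reading t c σ χ _ => ∀ ρ : Fin n → List A,
      (∀ k, R k = (ρ k).map some ++ [none]) →
      (∀ k ∈ χ, (R k).head? = some (σ k)) ∧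
      (∀ k x, c k = some x →
        (if k ∈ χ then (R k).tail else R k).head? = some x) ∧
      ∃ f ∈ M.accept, M.Run t (fun k => if k ∈ χ then (ρ k).tail else ρ k) f
  | .finish D _ => (∀ k, k ∉ D → R k = [none]) ∧ (∀ k ∈ D, R k = [])
  | .done => ∀ k, R k = []

theorem toSAA_sound_aux [Fintype A] {M : FAA A n} {i₀ : Fin n}
    {q g : (M.toSAA i₀).State} {R : Fin n → List (Option A)}
    (h : (M.toSAA i₀).Run q R g) (hg : g = SimState.done) :
    SimGoal M q R := by
  induction h with
  | nil s =>
    subst hg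
    intro k
    rfl
  | @eps s t f R hmem hrun ih =>
    specialize ih hg
    match s with
    | .reading _ _ _ _ _ => exact hmem.elim
    | .finish _ _ => exact hmem.elim
    | .done => exact hmem.elim
    | .ready s c =>
      rcases hmem with ⟨σ, χ, t', j, hcompat, hχ, ht, hjχ, rfl⟩ |
        ⟨j, hacc, hcomm, rfl⟩
      · intro ρ hρ
        obtain ⟨H1, H2, f', hf', hrunf⟩ := ih ρ hρ
        have hσeq : ∀ k, σ k = (ρ k).head? := by
          intro k
          by_cases hk : k ∈ χ
          · have := H1 k hk
            rw [hρ k, padded_head] at this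
            exact (Option.some_injective _ this).symm
          · have := H2 k (σ k) (by simp [hk])
            rw [if_neg hk, hρ k, padded_head] at this
            exact (Option.some_injective _ this).symm
        constructor
        · intro k x hk
          rw [hρ k, padded_head, ← hσeq k, hcompat k x hk]
        · refine ⟨f', hf', ?_⟩
          have hσfun : σ = fun i => (ρ i).head? := funext hσeq
          exact Run.step (χ := χ) (hσfun ▸ ht) (hσfun ▸ hχ) hrunf
      · intro ρ hρ
        obtain ⟨h1, -⟩ := ih
        have hρnil : ∀ k, ρ k = [] := by
          intro k
          have := (hρ k).symm.trans (h1 k (by simp))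
          have hlen := congrArg List.length this
          simpa using hlen
        constructor
        · intro k x hk
          rcases x with _ | a
          · rw [hρ k, hρnil k]; rfl
          · exact absurd hk (hcomm k a)
        · refine ⟨s, hacc, ?_⟩
          have : ρ = fun _ => [] := funext hρnil
          rw [this]
          exact Run.nil s
  | @step s t f c rest R hmem hr hrun ih =>
    specialize ih hg
    match s with
    | .ready _ _ => exact hmem.elim
    | .done => exact hmem.elim
    | .reading t₀ c₀ σ χ j =>
      obtain ⟨hjχ, ⟨a, rfl, hσj⟩, htgt⟩ := hmem
      have hrj : R j = some a :: rest := hr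
      have ihj : SimGoal M t (Function.update R j rest) := ih
      intro ρ hρ
      obtain ⟨tl, hρj, hrest⟩ : ∃ tl, ρ j = a :: tl ∧
          rest = tl.map some ++ [none] := by
        rcases hx : ρ j with _ | ⟨b, l⟩
        · rw [hρ j, hx] at hrj; simp at hrj
        · rw [hρ j, hx] at hrj
          simp at hrj
          exact ⟨l, by simp [hx, hrj.1], hrj.2.symm⟩
      have hρ' : ∀ k, Function.update R j rest k =
          ((Function.update ρ j tl k).map some ++ [none]) := by
        intro k
        rcases eq_or_ne k j with rfl | hk
        · simp [hrest]
        · simp [Function.update_apply, hk, hρ k]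
      rcases htgt with ⟨j', hj', rfl⟩ | ⟨herase, rfl⟩
      · obtain ⟨H1, H2, f', hf', hrunf⟩ := ihj (Function.update ρ j tl) hρ'
        refine ⟨?_, ?_, f', hf', ?_⟩
        · intro k hk
          rcases eq_or_ne k j with rfl | hkj
          · rw [hrj, hσj]; rfl
          · have := H1 k (Finset.mem_erase.2 ⟨hkj, hk⟩)
            rwa [Function.update_apply, if_neg hkj] at this
        · intro k x hk
          have := H2 k x hk
          rcases eq_or_ne k j with rfl | hkj
          · rw [if_neg (by simp), Function.update_self] at this
            rw [if_pos hjχ, hrj]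
            exact this
          · rw [Function.update_apply, if_neg hkj] at this
            by_cases hkχ : k ∈ χ
            · rw [if_pos (Finset.mem_erase.2 ⟨hkj, hkχ⟩)] at this
              rwa [if_pos hkχ]
            · rw [if_neg (fun hkk => hkχ (Finset.mem_of_mem_erase hkk))] at this
              rwa [if_neg hkχ]
        · have : (fun k => if k ∈ χ.erase j then (Function.update ρ j tl k).tail
              else Function.update ρ j tl k) =
              (fun k => if k ∈ χ then (ρ k).tail else ρ k) := by
            funext k
            rcases eq_or_ne k j with rfl | hk
            · simp [Finset.mem_erase, hjχ, hρj]
            · simp [Function.update_apply, hk, Finset.mem_erase, hk]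
          rwa [this] at hrunf
      · obtain ⟨Hc, f', hf', hrunf⟩ := ihj (Function.update ρ j tl) hρ'
        have hmemχ : ∀ k, k ∈ χ ↔ k = j := by
          intro k
          constructor
          · intro hk
            by_contra hkj
            exact Finset.notMem_empty k
              (herase ▸ Finset.mem_erase.2 ⟨hkj, hk⟩)
          · rintro rfl; exact hjχ
        refine ⟨?_, ?_, f', hf', ?_⟩
        · intro k hk
          rw [(hmemχ k).1 hk, hrj, hσj]; rfl
        · intro k x hk
          have := Hc k x hk
          rcases eq_or_ne k j with rfl | hkj
          · rw [Function.update_self] at this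
            rw [if_pos hjχ, hrj]
            exact this
          · rw [Function.update_apply, if_neg hkj] at this
            rwa [if_neg (fun hkk => hkj ((hmemχ k).1 hkk))]
        · have : Function.update ρ j tl =
              (fun k => if k ∈ χ then (ρ k).tail else ρ k) := by
            funext k
            rcases eq_or_ne k j with rfl | hk
            · simp [hjχ, hρj]
            · have hkχ : k ∉ χ := fun hkk => hk ((hmemχ k).1 hkk)
              simp [Function.update_apply, hk, hkχ]
          rwa [this] at hrunf
    | .finish D j =>
      obtain ⟨rfl, hjD, htgt⟩ := hmem
      have hrj : R j = none :: rest := hr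
      have ihj : SimGoal M t (Function.update R j rest) := ih
      rcases htgt with ⟨j', hj', rfl⟩ | ⟨huniv, rfl⟩
      · obtain ⟨h1, h2⟩ := ihj
        have hrest : rest = [] := by
          have := h2 j (Finset.mem_insert_self j D)
          rwa [Function.update_self] at this
        constructor
        · intro k hk
          rcases eq_or_ne k j with rfl | hkj
          · rw [hrj, hrest]
          · have := h1 k (by simp [Finset.mem_insert, hkj, hk])
            rwa [Function.update_apply, if_neg hkj] at this
        · intro k hk
          have hkj : k ≠ j := fun h => hjD (h ▸ hk)
          have := h2 k (Finset.mem_insert_of_mem hk)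
          rwa [Function.update_apply, if_neg hkj] at this
      · have hrest : rest = [] := by
          have := ihj j
          rwa [Function.update_self] at this
        constructor
        · intro k hk
          rcases eq_or_ne k j with rfl | hkj
          · rw [hrj, hrest]
          · exfalso
            have : k ∈ insert j D := huniv ▸ Finset.mem_univ k
            rcases Finset.mem_insert.1 this with h | h
            · exact hkj h
            · exact hk h
        · intro k hk
          have hkj : k ≠ j := fun h => hjD (h ▸ hk)
          have := ihj k
          rwa [Function.update_apply, if_neg hkj] at this

theorem toSAA_accepts [Fintype A] (M : FAA A n) (i₀ : Fin n)
    (w : Fin n → List A) : M.Accepts w ↔ (M.toSAA i₀).Accepts w := by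
  constructor
  · rintro ⟨s₀, hs₀, f, hf, hrun⟩
    refine ⟨SimState.ready s₀ (fun _ => none), ⟨s₀, hs₀, rfl⟩,
      SimState.done, rfl, ?_⟩
    exact toSAA_run i₀ hrun hf (fun _ => none) (fun k x hk => by simp at hk)
  · rintro ⟨q₀, ⟨s₀, hs₀, rfl⟩, f, hf, hrun⟩
    have hgoal := toSAA_sound_aux hrun hf
    obtain ⟨-, f', hf', hrunf⟩ := hgoal w (fun k => rfl)
    exact ⟨s₀, hs₀, f', hf', hrunf⟩

end FAA

/-- FAAs, DFAAs and SAAs accept the same class of `n`-variable languages: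
`L` is accepted by some non-deterministic filter asynchronous automaton iff it is
accepted by some deterministic-filter asynchronous automaton iff it is accepted by
some non-deterministic semi-sorted asynchronous automaton. -/
theorem faa_dfaa_saa_equivalent {A : Type} [Fintype A] {n : ℕ} (hn : 1 ≤ n)
    (L : Set (Fin n → List A)) :
    ((∃ M : FAA A n, ∀ w, w ∈ L ↔ M.Accepts w) ↔
        ∃ M : FAA A n, M.IsDeterministicFilter ∧ ∀ w, w ∈ L ↔ M.Accepts w) ∧
      ((∃ M : FAA A n, ∀ w, w ∈ L ↔ M.Accepts w) ↔ IsWeaklyRegular L) := by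
  have i₀ : Fin n := ⟨0, hn⟩
  constructor
  · constructor
    · rintro ⟨M, hM⟩
      exact ⟨M.detFilter, M.detFilter_isDeterministicFilter,
        fun w => (hM w).trans (M.detFilter_accepts w)⟩
    · rintro ⟨M, -, hM⟩
      exact ⟨M, hM⟩
  · constructor
    · rintro ⟨M, hM⟩
      exact ⟨M.toSAA i₀, fun w => (hM w).trans (M.toSAA_accepts i₀ w)⟩
    · rintro ⟨M, hM⟩
      exact ⟨M.toFAA, fun w => (hM w).trans (M.toFAA_accepts i₀ w)⟩
end

section
/- If L is a quasi-regular n-variable language over a finite alphabet A, then its complement (A*)^n minus L is also quasi-regular. -/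
namespace QRC

open SemiSortedAA

variable {A : Type} {n : ℕ}

theorem run_det {M : SemiSortedAA A n} {s : M.State} {r : Fin n → List (Option A)}
    {f f' : M.State} (h1 : M.Run s r f) (h2 : M.Run s r f') : f = f' := by
  induction h1 generalizing f' with
  | nil s =>
    cases h2 with
    | nil => rfl
    | step h hr hrun => simp at hr
  | step h hr hrun ih =>
    cases h2 with
    | nil => simp at hr
    | step h' hr' hrun' =>
      rw [hr] at hr'
      injection hr' with hc hrest
      subst hc; subst hrest
      rw [h] at h'
      injection h' with ht
      subst ht
      exact ih hrun'

def bump (b : Fin n → Bool) (j : Fin n) : Option A → (Fin n → Bool)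
  | none => Function.update b j true
  | some _ => b

noncomputable def dt (hn : 1 ≤ n) (b : Fin n → Bool) : Fin n :=
  if h : ∃ i, b i = false then h.choose else ⟨0, hn⟩

lemma dt_false (hn : 1 ≤ n) {b : Fin n → Bool} (h : ∃ i, b i = false) :
    b (dt hn b) = false := by
  rw [dt, dif_pos h]; exact h.choose_spec

variable (M : SemiSortedAA A n) (hn : 1 ≤ n)

noncomputable def cstep :
    Option M.State × (Fin n → Bool) → Option A → Option (Option M.State × (Fin n → Bool))
  | (some s, b), c =>
    if b (M.tape s) = true then some (none, bump b (dt hn b) c)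
    else
      match M.step s c with
      | some t => some (some t, bump b (M.tape s) c)
      | none => some (none, bump b (M.tape s) c)
  | (none, b), c => some (none, bump b (dt hn b) c)

noncomputable def ctape : Option M.State × (Fin n → Bool) → Fin n
  | (some s, b) => if b (M.tape s) = true then dt hn b else M.tape s
  | (none, b) => dt hn b

noncomputable def caa : SemiSortedAA A n where
  State := Option M.State × (Fin n → Bool)
  fintype := letI := M.fintype; inferInstance
  start := (some M.start, fun _ => false)
  accept := { p | ∀ f, p.1 = some f → f ∉ M.accept }
  step := cstep M hn
  tape := ctape M hn

def Inv (b : Fin n → Bool) (r : Fin n → List (Option A)) : Prop :=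
  ∀ i, (b i = true → r i = []) ∧ (b i = false → ∃ l : List A, r i = l.map some ++ [none])

variable {M hn}

lemma inv_cons {b : Fin n → Bool} {r : Fin n → List (Option A)} {j : Fin n}
    {c : Option A} {rest : List (Option A)}
    (hinv : Inv b r) (hr : r j = c :: rest) : b j = false := by
  cases hbj : b j with
  | false => rfl
  | true => have := (hinv j).1 hbj; rw [hr] at this; simp at this

lemma inv_step {b : Fin n → Bool} {r : Fin n → List (Option A)} {j : Fin n}
    {c : Option A} {rest : List (Option A)}
    (hinv : Inv b r) (hr : r j = c :: rest) :
    Inv (bump b j c) (Function.update r j rest) := by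
  have hbj : b j = false := inv_cons hinv hr
  obtain ⟨l, hl⟩ := (hinv j).2 hbj
  cases l with
  | nil =>
    rw [hr] at hl
    simp at hl
    obtain ⟨hc, hrest⟩ := hl
    subst hc; subst hrest
    intro i
    by_cases hij : i = j
    · subst hij
      constructor
      · intro _; simp
      · intro hfalse; simp [bump] at hfalse
    · simp only [bump, Function.update_of_ne hij]
      exact hinv i
  | cons a l' =>
    rw [hr] at hl
    simp at hl
    obtain ⟨hc, hrest⟩ := hl
    subst hc
    intro i
    by_cases hij : i = j
    · subst hij
      constructor
      · intro htrue; simp [bump] at htrue; rw [htrue] at hbj; simp at hbj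
      · intro _; exact ⟨l', by simpa using hrest⟩
    · simp only [bump, Function.update_of_ne hij]
      exact hinv i


lemma inv_all_empty {b : Fin n → Bool} {r : Fin n → List (Option A)}
    (hinv : Inv b r) (hr : ∀ i, r i = []) : ∀ i, b i = true := by
  intro i
  cases hbi : b i with
  | true => rfl
  | false =>
    obtain ⟨l, hl⟩ := (hinv i).2 hbi
    rw [hr i] at hl
    simp at hl

/-- Totality: from any state with a well-formed remaining content, a full run exists. -/
lemma runA :
    ∀ (N : ℕ) (S : (caa M hn).State) (r : Fin n → List (Option A)),
      (∑ i, (r i).length) ≤ N → Inv S.2 r → ∃ g, (caa M hn).Run S r g := by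
  intro N
  induction N with
  | zero =>
    intro S r hN hinv
    have hr : ∀ i, r i = [] := by
      intro i
      have : (r i).length = 0 := by
        have h1 : (r i).length ≤ ∑ j, (r j).length :=
          Finset.single_le_sum (f := fun j => (r j).length) (fun _ _ => Nat.zero_le _)
            (Finset.mem_univ i)
        omega
      exact List.length_eq_zero_iff.mp this
    have : r = fun _ => [] := funext hr
    subst this
    exact ⟨S, Run.nil S⟩
  | succ N ih =>
    intro S r hN hinv
    by_cases hall : ∀ i, r i = []
    · have : r = fun _ => [] := funext hall
      subst this
      exact ⟨S, Run.nil S⟩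
    · push_neg at hall
      obtain ⟨i0, hi0⟩ := hall
      have hbi0 : S.2 i0 = false := by
        cases hb : S.2 i0 with
        | false => rfl
        | true => exact absurd ((hinv i0).1 hb) hi0
      have hex : ∃ i, S.2 i = false := ⟨i0, hbi0⟩
      -- the tape to be read is unfinished
      set j := (caa M hn).tape S with hj
      have hbj : S.2 j = false := by
        obtain ⟨p, b⟩ := S
        cases p with
        | some s =>
          simp only [caa, ctape] at hj
          by_cases hb : b (M.tape s) = true
          · rw [hj, if_pos hb]; exact dt_false hn hex
          · rw [hj, if_neg hb]; simpa using hb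
        | none =>
          simp only [caa, ctape] at hj
          rw [hj]; exact dt_false hn hex
      obtain ⟨l, hl⟩ := (hinv j).2 hbj
      obtain ⟨c, rest, hr⟩ : ∃ c rest, r j = c :: rest := by
        cases l with
        | nil => exact ⟨none, [], by simpa using hl⟩
        | cons a l' => exact ⟨some a, l'.map some ++ [none], by simpa using hl⟩
      -- the step is always defined and leads to state with second component `bump S.2 j c`
      obtain ⟨T, hT, hT2⟩ : ∃ T, (caa M hn).step S c = some T ∧ T.2 = bump S.2 j c := by
        obtain ⟨p, b⟩ := S
        cases p with
        | some s =>
          by_cases hb : b (M.tape s) = true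
          · refine ⟨(none, bump b (dt hn b) c), ?_, ?_⟩
            · simp only [caa, cstep, if_pos hb]
            · have : j = dt hn b := by simp only [hj, caa, ctape, if_pos hb]
              rw [this]
          · have hjs : j = M.tape s := by simp only [hj, caa, ctape, if_neg hb]
            cases hms : M.step s c with
            | some t =>
              exact ⟨(some t, bump b (M.tape s) c),
                by simp only [caa, cstep, if_neg hb, hms], by rw [hjs]⟩
            | none =>
              exact ⟨(none, bump b (M.tape s) c),
                by simp only [caa, cstep, if_neg hb, hms], by rw [hjs]⟩
        | none =>
          refine ⟨(none, bump b (dt hn b) c), by simp only [caa, cstep], ?_⟩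
          have : j = dt hn b := by simp only [hj, caa, ctape]
          rw [this]
      have hinv' : Inv T.2 (Function.update r j rest) := by
        rw [hT2]; exact inv_step hinv hr
      have hsum : (∑ i, ((Function.update r j rest) i).length) ≤ N := by
        have heq : ∀ i, ((Function.update r j rest) i).length =
            Function.update (fun i => (r i).length) j rest.length i := by
          intro i
          by_cases hij : i = j
          · subst hij; simp
          · simp [Function.update_of_ne hij]
        rw [Finset.sum_congr rfl (fun i _ => heq i),
          Finset.sum_update_of_mem (Finset.mem_univ j)]
        have : (∑ i, (r i).length) =
            (r j).length + ∑ i ∈ Finset.univ.erase j, (r i).length :=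
          (Finset.add_sum_erase _ _ (Finset.mem_univ j)).symm
        rw [this, hr] at hN
        simp only [List.length_cons, Finset.erase_eq] at hN ⊢
        omega
      obtain ⟨g, hg⟩ := ih T (Function.update r j rest) hsum hinv'
      exact ⟨g, Run.step hT hr hg⟩

/-- Simulation: a run of `M` lifts to a run of `caa M hn`. -/
lemma runB {s f : M.State} {r : Fin n → List (Option A)} {b : Fin n → Bool}
    (h : M.Run s r f) (hinv : Inv b r) :
    (caa M hn).Run (some s, b) r (some f, fun _ => true) := by
  induction h generalizing b with
  | nil s =>
    have hb : b = fun _ => true := funext (inv_all_empty hinv (fun _ => rfl))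
    subst hb
    exact Run.nil _
  | step h hr hrun ih =>
    rename_i s t f c rest r
    have hbj : b (M.tape s) = false := inv_cons hinv hr
    have hinv' : Inv (bump b (M.tape s) c) (Function.update r (M.tape s) rest) :=
      inv_step hinv hr
    have hstep : (caa M hn).step (some s, b) c = some (some t, bump b (M.tape s) c) := by
      simp only [caa, cstep, hbj, if_neg (by simp : ¬ (false = true)), h]
    have htape : (caa M hn).tape (some s, b) = M.tape s := by
      simp only [caa, ctape, hbj, if_neg (by simp : ¬ (false = true))]
    exact Run.step (c := c) (rest := rest) hstep (by rw [htape]; exact hr)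
      (by rw [htape]; exact ih hinv')

/-- Soundness: any full run of `caa M hn` ends with all tapes finished, and if it
ends in a live state then it projects to a run of `M`. -/
lemma runC {S g : (caa M hn).State} {r : Fin n → List (Option A)}
    (h : (caa M hn).Run S r g) (hinv : Inv S.2 r) :
    (∀ i, g.2 i = true) ∧ ∀ f, g.1 = some f → ∃ s, S.1 = some s ∧ M.Run s r f := by
  induction h with
  | nil s =>
    refine ⟨inv_all_empty hinv (fun _ => rfl), fun f hf => ?_⟩
    obtain ⟨p, b⟩ := s
    simp only at hf
    exact ⟨f, by rw [hf], Run.nil f⟩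
  | step h hr hrun ih =>
    rename_i S T g c rest r
    set j := (caa M hn).tape S with hj
    have hbj : S.2 j = false := inv_cons hinv hr
    -- analyze the step
    obtain ⟨p, b⟩ := S
    cases p with
    | some s =>
      by_cases hb : b (M.tape s) = true
      · -- dead-ish: goes to fst = none
        have hjd : j = dt hn b := by simp only [hj, caa, ctape, if_pos hb]
        have hT : T = (none, bump b (dt hn b) c) := by
          have : (caa M hn).step (some s, b) c = some (none, bump b (dt hn b) c) := by
            simp only [caa, cstep, if_pos hb]
          rw [this] at h; exact (Option.some.inj h).symm
        have hinv' : Inv T.2 (Function.update r j rest) := by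
          rw [hT, hjd]; exact inv_step hinv (by rwa [hjd] at hr)
        obtain ⟨h1, h2⟩ := ih hinv'
        refine ⟨h1, fun f hf => ?_⟩
        obtain ⟨s', hs', _⟩ := h2 f hf
        rw [hT] at hs'
        simp at hs'
      · have hjs : j = M.tape s := by simp only [hj, caa, ctape, if_neg hb]
        cases hms : M.step s c with
        | some t =>
          have hT : T = (some t, bump b (M.tape s) c) := by
            have : (caa M hn).step (some s, b) c = some (some t, bump b (M.tape s) c) := by
              simp only [caa, cstep, if_neg hb, hms]
            rw [this] at h; exact (Option.some.inj h).symm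
          have hinv' : Inv T.2 (Function.update r j rest) := by
            rw [hT, hjs]; exact inv_step hinv (by rwa [hjs] at hr)
          obtain ⟨h1, h2⟩ := ih hinv'
          refine ⟨h1, fun f hf => ?_⟩
          obtain ⟨s', hs', hrun'⟩ := h2 f hf
          rw [hT] at hs'
          simp only at hs'
          injection hs' with hs'
          subst hs'
          refine ⟨s, rfl, Run.step hms (by rwa [hjs] at hr) ?_⟩
          rwa [hjs] at hrun'
        | none =>
          have hT : T = (none, bump b (M.tape s) c) := by
            have : (caa M hn).step (some s, b) c = some (none, bump b (M.tape s) c) := by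
              simp only [caa, cstep, if_neg hb, hms]
            rw [this] at h; exact (Option.some.inj h).symm
          have hinv' : Inv T.2 (Function.update r j rest) := by
            rw [hT, hjs]; exact inv_step hinv (by rwa [hjs] at hr)
          obtain ⟨h1, h2⟩ := ih hinv'
          refine ⟨h1, fun f hf => ?_⟩
          obtain ⟨s', hs', _⟩ := h2 f hf
          rw [hT] at hs'
          simp at hs'
    | none =>
      have hjd : j = dt hn b := by simp only [hj, caa, ctape]
      have hT : T = (none, bump b (dt hn b) c) := by
        have : (caa M hn).step (none, b) c = some (none, bump b (dt hn b) c) := by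
          simp only [caa, cstep]
        rw [this] at h; exact (Option.some.inj h).symm
      have hinv' : Inv T.2 (Function.update r j rest) := by
        rw [hT, hjd]; exact inv_step hinv (by rwa [hjd] at hr)
      obtain ⟨h1, h2⟩ := ih hinv'
      refine ⟨h1, fun f hf => ?_⟩
      obtain ⟨s', hs', _⟩ := h2 f hf
      rw [hT] at hs'
      simp at hs'

end QRC

/-- Quasi-regular languages are closed under complementation: if `L` is a
quasi-regular `n`-variable language over a finite alphabet `A`, then so is its
complement `(A*)^n \ L`. -/
theorem isQuasiRegular_compl {A : Type} [Fintype A] {n : ℕ} (hn : 1 ≤ n)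
    (L : Set (Fin n → List A)) (hL : IsQuasiRegular L) :
    IsQuasiRegular Lᶜ := by
  obtain ⟨M, hM⟩ := hL
  refine ⟨QRC.caa M hn, fun w => ?_⟩
  set r0 : Fin n → List (Option A) := fun i => (w i).map some ++ [none] with hr0
  have hinv0 : QRC.Inv (A := A) (fun _ => false) r0 := by
    intro i
    exact ⟨fun h => by simp at h, fun _ => ⟨w i, rfl⟩⟩
  have hstart1 : (QRC.caa M hn).start.1 = some M.start := rfl
  have hstart2 : (QRC.caa M hn).start.2 = fun _ => false := rfl
  constructor
  · -- w ∉ L → complement automaton accepts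
    intro hw
    obtain ⟨g, hg⟩ := QRC.runA (M := M) (hn := hn) (∑ i, (r0 i).length) (QRC.caa M hn).start r0 le_rfl
      (hstart2 ▸ hinv0)
    refine ⟨g, ?_, hg⟩
    -- g is accepting
    intro f hf hfacc
    obtain ⟨_, h2⟩ := QRC.runC (M := M) (hn := hn) hg (hstart2 ▸ hinv0)
    obtain ⟨s0, hs0, hrun⟩ := h2 f hf
    rw [hstart1] at hs0
    injection hs0 with hs0
    subst hs0
    exact hw (by rw [hM]; exact ⟨f, hfacc, hrun⟩)
  · -- complement automaton accepts → w ∉ L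
    rintro ⟨g, hgacc, hgrun⟩ hwL
    obtain ⟨f, hfacc, hrun⟩ := (hM w).mp hwL
    have hB : (QRC.caa M hn).Run (QRC.caa M hn).start r0 (some f, fun _ => true) :=
      QRC.runB (hn := hn) hrun hinv0
    have := QRC.run_det hgrun hB
    subst this
    exact hgacc f rfl hfacc
end

section
/- Over the one-letter alphabet A = {x}, the 2-variable languages L_1 = {(x^n, x^{2n}) : n >= 0} and L_2 = {(x^{2n}, x^n) : n >= 0} are both quasi-regular, but their union L_1 union L_2 is not quasi-regular. In particular, quasi-regular languages are not closed under union. -/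
namespace QRAux
open SemiSortedAA

/-- `x^k` as tape content. -/
abbrev rep (k : ℕ) : List (Option Unit) := List.replicate k (some ())

/-- the word pair `(x^a, x^b)`. -/
def wrd (a b : ℕ) : Fin 2 → List Unit := ![List.replicate a (), List.replicate b ()]

/-- tape contents `(x^a $, x^b $)`. -/
def inp (a b : ℕ) : Fin 2 → List (Option Unit) := ![rep a ++ [none], rep b ++ [none]]

/-- tape contents: `x^ℓ $` on tape `i`, nothing on the other tape. -/
def sole (i : Fin 2) (ℓ : ℕ) : Fin 2 → List (Option Unit) :=
  fun j => if j = i then rep ℓ ++ [none] else []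

lemma fin2 (i : Fin 2) : i = 0 ∨ i = 1 := by fin_cases i <;> simp

variable {M : SemiSortedAA Unit 2}

/-- reading only letters `x` (no `$`), consuming `p` of them from tape 0
and `q` from tape 1. -/
inductive ReadX (M : SemiSortedAA Unit 2) : M.State → ℕ → ℕ → M.State → Prop
  | refl (s) : ReadX M s 0 0 s
  | step0 {s t u p q} (h0 : M.tape s = 0) (h : M.step s (some ()) = some t)
      (hr : ReadX M t p q u) : ReadX M s (p+1) q u
  | step1 {s t u p q} (h0 : M.tape s = 1) (h : M.step s (some ()) = some t)
      (hr : ReadX M t p q u) : ReadX M s p (q+1) u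

/-- reading `x^ℓ $`, all from tape `i`, ending in `f`. -/
inductive Tail (M : SemiSortedAA Unit 2) (i : Fin 2) : M.State → ℕ → M.State → Prop
  | last {s f} (hi : M.tape s = i) (h : M.step s none = some f) : Tail M i s 0 f
  | step {s t f ℓ} (hi : M.tape s = i) (h : M.step s (some ()) = some t)
      (ht : Tail M i t ℓ f) : Tail M i s (ℓ+1) f

lemma run_nil {s f : M.State} (h : M.Run s (fun _ => []) f) : s = f := by
  cases h with
  | nil => rfl
  | step h hr hrun => simp at hr

lemma run_tail {i : Fin 2} :
    ∀ {u r f}, M.Run u r f → ∀ ℓ, r = sole i ℓ → Tail M i u ℓ f := by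
  intro u r f h
  induction h with
  | nil s => intro ℓ hℓ; exfalso; have := congrFun hℓ i; simp [sole] at this
  | @step s t f c rest r h hr hrun ih =>
    intro ℓ hℓ
    subst hℓ
    have hti : M.tape s = i := by
      by_contra hne
      rw [show sole i ℓ (M.tape s) = [] from if_neg hne] at hr
      simp at hr
    rw [hti] at hr
    rw [show sole i ℓ i = rep ℓ ++ [none] from if_pos rfl] at hr
    cases ℓ with
    | zero =>
      simp [rep] at hr
      obtain ⟨rfl, rfl⟩ := hr
      have hupd : Function.update (sole i 0) (M.tape s) ([] : List (Option Unit))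
          = fun _ => [] := by
        funext j
        rw [hti]
        by_cases hj : j = i <;> simp [Function.update, sole, hj]
      rw [hupd] at hrun
      have := run_nil hrun
      subst this
      exact Tail.last hti h
    | succ ℓ' =>
      rw [show rep (ℓ'+1) = some () :: rep ℓ' from rfl] at hr
      simp at hr
      obtain ⟨rfl, rfl⟩ := hr
      refine Tail.step hti h (ih ℓ' ?_)
      funext j
      rw [hti]
      by_cases hj : j = i <;> simp [Function.update, sole, hj]

lemma run_of_tail {i : Fin 2} {u f : M.State} {ℓ : ℕ} (h : Tail M i u ℓ f) :
    M.Run u (sole i ℓ) f := by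
  induction h with
  | @last s f hi hstep =>
    refine Run.step (rest := []) hstep (by rw [hi]; simp [sole, rep]) ?_
    have hupd : Function.update (sole i 0) (M.tape s) ([] : List (Option Unit))
        = fun _ => [] := by
      funext j; rw [hi]
      by_cases hj : j = i <;> simp [Function.update, sole, hj]
    rw [hupd]; exact Run.nil _
  | @step s t f ℓ hi hstep ht ih =>
    refine Run.step (rest := rep ℓ ++ [none]) hstep (by rw [hi]; simp [sole, rep, List.replicate_succ]) ?_
    have hupd : Function.update (sole i (ℓ+1)) (M.tape s) (rep ℓ ++ [none])
        = sole i ℓ := by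
      funext j; rw [hi]
      by_cases hj : j = i <;> simp [Function.update, sole, hj]
    rw [hupd]; exact ih

lemma readx_run {s s' : M.State} {p q : ℕ} (h : ReadX M s p q s')
    {r : Fin 2 → List (Option Unit)} {f : M.State} (hr : M.Run s' r f) :
    M.Run s (fun i => (if i = (0 : Fin 2) then rep p else rep q) ++ r i) f := by
  induction h with
  | refl s => simpa using hr
  | @step0 s t u p q h0 h _ ih =>
    refine Run.step (rest := rep p ++ r 0) h ?_ ?_
    · rw [h0]; simp [rep, List.replicate_succ]
    · have hupd : Function.update
          (fun i => (if i = (0:Fin 2) then rep (p+1) else rep q) ++ r i)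
          (M.tape s) (rep p ++ r 0)
          = fun i => (if i = (0:Fin 2) then rep p else rep q) ++ r i := by
        funext j; rw [h0]
        rcases fin2 j with rfl | rfl <;> simp [Function.update]
      rw [hupd]; exact ih hr
  | @step1 s t u p q h0 h _ ih =>
    refine Run.step (rest := rep q ++ r 1) h ?_ ?_
    · rw [h0]; simp [rep, List.replicate_succ]
    · have hupd : Function.update
          (fun i => (if i = (0:Fin 2) then rep p else rep (q+1)) ++ r i)
          (M.tape s) (rep q ++ r 1)
          = fun i => (if i = (0:Fin 2) then rep p else rep q) ++ r i := by
        funext j; rw [h0]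
        rcases fin2 j with rfl | rfl <;> simp [Function.update]
      rw [hupd]; exact ih hr

end QRAux

set_option maxRecDepth 8000

namespace QRAux
open SemiSortedAA

variable {M : SemiSortedAA Unit 2}

lemma readx_trans {s t v : M.State} {p q p' q' : ℕ} (h1 : ReadX M s p q t)
    (h2 : ReadX M t p' q' v) : ReadX M s (p + p') (q + q') v := by
  induction h1 with
  | refl s => simpa using h2
  | step0 h0 h _ ih =>
    have := ReadX.step0 h0 h (ih h2)
    convert this using 1 <;> omega
  | step1 h0 h _ ih =>
    have := ReadX.step1 h0 h (ih h2)
    convert this using 1 <;> omega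

lemma readx_mono {s t : M.State} {p q : ℕ} (h1 : ReadX M s p q t) :
    ∀ ⦃p' q' : ℕ⦄ ⦃t' : M.State⦄, ReadX M s p' q' t' → p + q ≤ p' + q' →
      p ≤ p' ∧ q ≤ q' := by
  induction h1 with
  | refl s => intro p' q' t' _ _; omega
  | @step0 s t₁ u p q h0 h _ ih =>
    intro p' q' t' h2 hle
    cases h2 with
    | refl => omega
    | @step0 _ t₂ _ p₂ _ h0' h' hr' =>
      rw [h] at h'
      injection h' with h''
      subst h''
      have := ih hr' (by omega)
      omega
    | step1 h0' h' hr' => rw [h0] at h0'; exact absurd h0' (by decide)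
  | @step1 s t₁ u p q h0 h _ ih =>
    intro p' q' t' h2 hle
    cases h2 with
    | refl => omega
    | step0 h0' h' hr' => rw [h0] at h0'; exact absurd h0' (by decide)
    | @step1 _ t₂ _ _ q₂ h0' h' hr' =>
      rw [h] at h'
      injection h' with h''
      subst h''
      have := ih hr' (by omega)
      omega

lemma readx_comp {s t t' : M.State} {p q p' q' : ℕ} (h1 : ReadX M s p q t)
    (h2 : ReadX M s p' q' t') : (p ≤ p' ∧ q ≤ q') ∨ (p' ≤ p ∧ q' ≤ q) := by
  rcases le_total (p + q) (p' + q') with hle | hle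
  · exact Or.inl (readx_mono h1 h2 hle)
  · exact Or.inr (readx_mono h2 h1 hle)

/-- decomposition of a full run on `(x^a $, x^b $)`:
first a pure-`x` phase, then the first `$` is read, then a one-tape tail. -/
lemma run_decomp :
    ∀ {s r f}, M.Run s r f → ∀ a b, r = inp a b →
      (∃ q s' u, q ≤ b ∧ ReadX M s a q s' ∧ M.tape s' = 0 ∧
        M.step s' none = some u ∧ Tail M 1 u (b - q) f) ∨
      (∃ p s' u, p ≤ a ∧ ReadX M s p b s' ∧ M.tape s' = 1 ∧
        M.step s' none = some u ∧ Tail M 0 u (a - p) f) := by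
  intro s r f h
  induction h with
  | nil s =>
    intro a b hab
    exfalso
    have := congrFun hab 0
    simp [inp] at this
  | @step s t f c rest r h hr hrun ih =>
    intro a b hab
    subst hab
    rcases fin2 (M.tape s) with h0 | h0
    · rw [h0] at hr
      rw [show inp a b 0 = rep a ++ [none] from rfl] at hr
      cases a with
      | zero =>
        simp [rep] at hr
        obtain ⟨rfl, rfl⟩ := hr
        have hupd : Function.update (inp 0 b) (M.tape s) ([] : List (Option Unit))
            = sole 1 b := by
          funext j; rw [h0]
          rcases fin2 j with rfl | rfl <;> simp [Function.update, inp, sole]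
        rw [hupd] at hrun
        exact Or.inl ⟨0, s, t, Nat.zero_le _, ReadX.refl s, h0, h,
          by simpa using run_tail hrun b rfl⟩
      | succ a' =>
        rw [show rep (a'+1) = some () :: rep a' from rfl] at hr
        simp at hr
        obtain ⟨rfl, rfl⟩ := hr
        have hupd : Function.update (inp (a'+1) b) (M.tape s) (rep a' ++ [none])
            = inp a' b := by
          funext j; rw [h0]
          rcases fin2 j with rfl | rfl <;> simp [Function.update, inp]
        rcases ih a' b hupd with ⟨q, s', u, hq, hrx, ht, hst, htail⟩ |
            ⟨p, s', u, hp, hrx, ht, hst, htail⟩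
        · exact Or.inl ⟨q, s', u, hq, ReadX.step0 h0 h hrx, ht, hst, htail⟩
        · refine Or.inr ⟨p + 1, s', u, by omega, ReadX.step0 h0 h hrx, ht, hst, ?_⟩
          have : a' + 1 - (p + 1) = a' - p := by omega
          rw [this]; exact htail
    · rw [h0] at hr
      rw [show inp a b 1 = rep b ++ [none] from rfl] at hr
      cases b with
      | zero =>
        simp [rep] at hr
        obtain ⟨rfl, rfl⟩ := hr
        have hupd : Function.update (inp a 0) (M.tape s) ([] : List (Option Unit))
            = sole 0 a := by
          funext j; rw [h0]
          rcases fin2 j with rfl | rfl <;> simp [Function.update, inp, sole]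
        rw [hupd] at hrun
        exact Or.inr ⟨0, s, t, Nat.zero_le _, ReadX.refl s, h0, h,
          by simpa using run_tail hrun a rfl⟩
      | succ b' =>
        rw [show rep (b'+1) = some () :: rep b' from rfl] at hr
        simp at hr
        obtain ⟨rfl, rfl⟩ := hr
        have hupd : Function.update (inp a (b'+1)) (M.tape s) (rep b' ++ [none])
            = inp a b' := by
          funext j; rw [h0]
          rcases fin2 j with rfl | rfl <;> simp [Function.update, inp]
        rcases ih a b' hupd with ⟨q, s', u, hq, hrx, ht, hst, htail⟩ |
            ⟨p, s', u, hp, hrx, ht, hst, htail⟩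
        · refine Or.inl ⟨q + 1, s', u, by omega, ReadX.step1 h0 h hrx, ht, hst, ?_⟩
          have : b' + 1 - (q + 1) = b' - q := by omega
          rw [this]; exact htail
        · exact Or.inr ⟨p, s', u, hp, ReadX.step1 h0 h hrx, ht, hst, htail⟩

lemma accepts_inp (a b : ℕ) :
    M.Accepts (wrd a b) ↔ ∃ f ∈ M.accept, M.Run M.start (inp a b) f := by
  have : (fun i => ((wrd a b i).map some ++ [none])) = inp a b := by
    funext j
    rcases fin2 j with rfl | rfl <;> simp [wrd, inp, rep]
  rw [Accepts, this]

/-- first-dollar-on-tape-0 data leading to acceptance. -/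
def Dev (M : SemiSortedAA Unit 2) (i : Fin 2) (p q : ℕ) (u : M.State) : Prop :=
  ∃ s', ReadX M M.start p q s' ∧ M.tape s' = i ∧ M.step s' none = some u

def AccT (M : SemiSortedAA Unit 2) (i : Fin 2) (u : M.State) (ℓ : ℕ) : Prop :=
  ∃ f ∈ M.accept, Tail M i u ℓ f

lemma accepts_decomp {a b : ℕ} (h : M.Accepts (wrd a b)) :
    (∃ q u, q ≤ b ∧ Dev M 0 a q u ∧ AccT M 1 u (b - q)) ∨
    (∃ p u, p ≤ a ∧ Dev M 1 p b u ∧ AccT M 0 u (a - p)) := by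
  rw [accepts_inp] at h
  obtain ⟨f, hf, hrun⟩ := h
  rcases run_decomp hrun a b rfl with ⟨q, s', u, hq, hrx, ht, hst, htail⟩ |
      ⟨p, s', u, hp, hrx, ht, hst, htail⟩
  · exact Or.inl ⟨q, u, hq, ⟨s', hrx, ht, hst⟩, f, hf, htail⟩
  · exact Or.inr ⟨p, u, hp, ⟨s', hrx, ht, hst⟩, f, hf, htail⟩

lemma accepts_build0 {p q ℓ : ℕ} {u : M.State} (hdev : Dev M 0 p q u)
    (hacc : AccT M 1 u ℓ) : M.Accepts (wrd p (q + ℓ)) := by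
  obtain ⟨s', hrx, ht, hst⟩ := hdev
  obtain ⟨f, hf, htail⟩ := hacc
  rw [accepts_inp]
  refine ⟨f, hf, ?_⟩
  have hrun2 : M.Run s' (fun i => if i = (0:Fin 2) then [none] else rep ℓ ++ [none]) f := by
    refine Run.step (rest := []) hst (by rw [ht]; simp) ?_
    have hupd : Function.update
        (fun i => if i = (0:Fin 2) then [none] else rep ℓ ++ [none])
        (M.tape s') ([] : List (Option Unit)) = sole 1 ℓ := by
      funext j; rw [ht]
      rcases fin2 j with rfl | rfl <;> simp [Function.update, sole]
    rw [hupd]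
    exact run_of_tail htail
  have := readx_run hrx hrun2
  have heq : (fun i => (if i = (0:Fin 2) then rep p else rep q) ++
      (if i = (0:Fin 2) then [none] else rep ℓ ++ [none])) = inp p (q + ℓ) := by
    funext j
    rcases fin2 j with rfl | rfl
    · simp [inp]
    · have h1 : inp p (q+ℓ) 1 = rep q ++ (rep ℓ ++ [none]) := by
        show rep (q+ℓ) ++ [none] = _
        rw [show rep (q+ℓ) = rep q ++ rep ℓ from List.replicate_add q ℓ _, List.append_assoc]
      rw [h1]; simp
  rwa [heq] at this

lemma accepts_build1 {p q ℓ : ℕ} {u : M.State} (hdev : Dev M 1 p q u)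
    (hacc : AccT M 0 u ℓ) : M.Accepts (wrd (p + ℓ) q) := by
  obtain ⟨s', hrx, ht, hst⟩ := hdev
  obtain ⟨f, hf, htail⟩ := hacc
  rw [accepts_inp]
  refine ⟨f, hf, ?_⟩
  have hrun2 : M.Run s' (fun i => if i = (0:Fin 2) then rep ℓ ++ [none] else [none]) f := by
    refine Run.step (rest := []) hst (by rw [ht]; simp) ?_
    have hupd : Function.update
        (fun i => if i = (0:Fin 2) then rep ℓ ++ [none] else [none])
        (M.tape s') ([] : List (Option Unit)) = sole 0 ℓ := by
      funext j; rw [ht]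
      rcases fin2 j with rfl | rfl <;> simp [Function.update, sole]
    rw [hupd]
    exact run_of_tail htail
  have := readx_run hrx hrun2
  have heq : (fun i => (if i = (0:Fin 2) then rep p else rep q) ++
      (if i = (0:Fin 2) then rep ℓ ++ [none] else [none])) = inp (p + ℓ) q := by
    funext j
    rcases fin2 j with rfl | rfl
    · have h1 : inp (p+ℓ) q 0 = rep p ++ (rep ℓ ++ [none]) := by
        show rep (p+ℓ) ++ [none] = _
        rw [show rep (p+ℓ) = rep p ++ rep ℓ from List.replicate_add p ℓ _, List.append_assoc]
      rw [h1]; simp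
    · simp [inp]
  rwa [heq] at this

end QRAux

namespace QRAux
open SemiSortedAA

variable {M : SemiSortedAA Unit 2}

lemma wrd_zero (a b : ℕ) : wrd a b 0 = List.replicate a () := rfl
lemma wrd_one (a b : ℕ) : wrd a b 1 = List.replicate b () := rfl

lemma repU_eq_iff {a m : ℕ} :
    List.replicate a () = List.replicate m () ↔ a = m := by
  constructor
  · intro h
    have := congrArg List.length h
    simpa using this
  · rintro rfl; rfl

/-- the core impossibility: no machine accepts exactly `L₁ ∪ L₂`. -/
lemma no_machine (M : SemiSortedAA Unit 2)
    (HAcc : ∀ a b, M.Accepts (wrd a b) ↔ (b = 2 * a ∨ a = 2 * b)) : False := by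
  haveI := M.fintype
  have h1 : ∀ m : ℕ, ∃ d : Bool × M.State,
      (d.1 = true → ∃ q, q ≤ 2*m ∧ Dev M 0 m q d.2 ∧ AccT M 1 d.2 (2*m - q)) ∧
      (d.1 = false → ∃ p, p ≤ m ∧ Dev M 1 p (2*m) d.2 ∧ AccT M 0 d.2 (m - p)) := by
    intro m
    have hacc : M.Accepts (wrd m (2*m)) := (HAcc _ _).mpr (Or.inl rfl)
    rcases accepts_decomp hacc with ⟨q, u, hq, hdev, ht⟩ | ⟨p, u, hp, hdev, ht⟩
    · exact ⟨(true, u), fun _ => ⟨q, hq, hdev, ht⟩, by simp⟩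
    · exact ⟨(false, u), by simp, fun _ => ⟨p, hp, hdev, ht⟩⟩
  have h2 : ∀ m : ℕ, ∃ d : Bool × M.State,
      (d.1 = true → ∃ q, q ≤ m ∧ Dev M 0 (2*m) q d.2 ∧ AccT M 1 d.2 (m - q)) ∧
      (d.1 = false → ∃ p, p ≤ 2*m ∧ Dev M 1 p m d.2 ∧ AccT M 0 d.2 (2*m - p)) := by
    intro m
    have hacc : M.Accepts (wrd (2*m) m) := (HAcc _ _).mpr (Or.inr rfl)
    rcases accepts_decomp hacc with ⟨q, u, hq, hdev, ht⟩ | ⟨p, u, hp, hdev, ht⟩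
    · exact ⟨(true, u), fun _ => ⟨q, hq, hdev, ht⟩, by simp⟩
    · exact ⟨(false, u), by simp, fun _ => ⟨p, hp, hdev, ht⟩⟩
  choose g1 hg1a hg1b using h1
  choose g2 hg2a hg2b using h2
  obtain ⟨v, hv⟩ := Finite.exists_infinite_fiber (fun m => (g1 m, g2 m))
  have hS : ((fun m : ℕ => (g1 m, g2 m)) ⁻¹' {v}).Infinite :=
    (Set.infinite_coe_iff (s := (fun m : ℕ => (g1 m, g2 m)) ⁻¹' {v})).mp hv
  set S : Set ℕ := (fun m : ℕ => (g1 m, g2 m)) ⁻¹' {v} with hSdef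
  have hSmem : ∀ m ∈ S, g1 m = v.1 ∧ g2 m = v.2 := by
    intro m hm
    have : (g1 m, g2 m) = v := hm
    exact ⟨congrArg Prod.fst this, congrArg Prod.snd this⟩
  obtain ⟨m0, hm0S, -⟩ := hS.exists_gt 0
  have Key1 : ∃ c1 : ℕ, ∀ m ∈ S, ∃ pp qq ss,
      ReadX M M.start pp qq ss ∧ pp ≤ m ∧ 2*m ≤ qq + c1 := by
    rcases hb : v.1.1 with _ | _
    · -- false case : deviation on tape 1, point (p, 2m)
      refine ⟨0, fun m hm => ?_⟩
      obtain ⟨p, hp, ⟨s', hrx, -, -⟩, -⟩ :=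
        hg1b m (by rw [(hSmem m hm).1, hb])
      exact ⟨p, 2*m, s', hrx, hp, by omega⟩
    · -- true case : deviation on tape 0, point (m, q)
      have e0 : (g1 m0).2 = v.1.2 := by rw [(hSmem m0 hm0S).1]
      obtain ⟨q0, hq0, hdev0, -⟩ := hg1a m0 (by rw [(hSmem m0 hm0S).1, hb])
      rw [e0] at hdev0
      refine ⟨2*m0 - q0, fun m hm => ?_⟩
      have em : (g1 m).2 = v.1.2 := by rw [(hSmem m hm).1]
      obtain ⟨qm, hqm, ⟨sm, hrxm, -, -⟩, haccm⟩ := hg1a m (by rw [(hSmem m hm).1, hb])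
      rw [em] at haccm
      have hcross := (HAcc _ _).mp (accepts_build0 hdev0 haccm)
      exact ⟨m, qm, sm, hrxm, le_refl m, by omega⟩
  have Key2 : ∃ c2 : ℕ, ∀ m ∈ S, ∃ pp qq ss,
      ReadX M M.start pp qq ss ∧ qq ≤ m ∧ 2*m ≤ pp + c2 := by
    rcases hb : v.2.1 with _ | _
    · -- false case : deviation on tape 1, point (p, m) with 2m - p accepted from u
      have e0 : (g2 m0).2 = v.2.2 := by rw [(hSmem m0 hm0S).2]
      obtain ⟨p0, hp0, hdev0, -⟩ := hg2b m0 (by rw [(hSmem m0 hm0S).2, hb])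
      rw [e0] at hdev0
      refine ⟨2*m0 - p0, fun m hm => ?_⟩
      have em : (g2 m).2 = v.2.2 := by rw [(hSmem m hm).2]
      obtain ⟨pm, hpm, ⟨sm, hrxm, -, -⟩, haccm⟩ := hg2b m (by rw [(hSmem m hm).2, hb])
      rw [em] at haccm
      have hcross := (HAcc _ _).mp (accepts_build1 hdev0 haccm)
      exact ⟨pm, m, sm, hrxm, le_refl m, by omega⟩
    · -- true case : deviation on tape 0, point (2m, q)
      refine ⟨0, fun m hm => ?_⟩
      obtain ⟨q, hq, ⟨s', hrx, -, -⟩, -⟩ :=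
        hg2a m (by rw [(hSmem m hm).2, hb])
      exact ⟨2*m, q, s', hrx, hq, by omega⟩
  obtain ⟨c1, K1⟩ := Key1
  obtain ⟨c2, K2⟩ := Key2
  obtain ⟨m, hmS, hm⟩ := hS.exists_gt (c1 + c2)
  obtain ⟨p1, q1, s1, hr1, h1a, h1b⟩ := K1 m hmS
  obtain ⟨p2, q2, s2, hr2, h2a, h2b⟩ := K2 m hmS
  rcases readx_comp hr1 hr2 with ⟨hA, hB⟩ | ⟨hA, hB⟩ <;> omega

end QRAux

namespace QRAux
open SemiSortedAA

lemma unit_list (l : List Unit) : l = List.replicate l.length () := by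
  induction l with
  | nil => rfl
  | cons a t ih => simp [List.replicate_succ, ih.symm]

/-- the machine for `L₁ = {(x^m, x^{2m})}` -/
inductive St : Type
  | q0 | q1 | q2 | q3 | q4
  deriving DecidableEq

instance : Fintype St where
  elems := {.q0, .q1, .q2, .q3, .q4}
  complete := fun x => by cases x <;> simp

abbrev M1 : SemiSortedAA Unit 2 where
  State := St
  fintype := inferInstance
  start := .q0
  accept := {.q4}
  step s c :=
    match s, c with
    | .q0, some _ => some .q1
    | .q0, none => some .q3
    | .q1, some _ => some .q2
    | .q2, some _ => some .q0
    | .q3, none => some .q4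
    | _, _ => none
  tape s := match s with | .q0 => 0 | _ => 1

def wt1 : St → ℕ
  | .q1 => 2
  | .q2 => 1
  | _ => 0

lemma M1_inv {s : M1.State} {p q : ℕ} {t : M1.State} (h : ReadX M1 s p q t) :
    ((s = .q3 ∨ s = .q4) → (p = 0 ∧ q = 0 ∧ t = s)) ∧
    ((s ≠ .q3 ∧ s ≠ .q4) → (t ≠ .q3 ∧ t ≠ .q4 ∧ q + wt1 t = 2*p + wt1 s)) := by
  induction h with
  | refl s => exact ⟨fun _ => ⟨rfl, rfl, rfl⟩, fun h => ⟨h.1, h.2, rfl⟩⟩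
  | @step0 s t1 u p q h0 hstep hr ih =>
    cases s with
    | q0 =>
      simp only [show M1.step St.q0 (some ()) = some St.q1 from rfl,
        Option.some.injEq] at hstep
      subst hstep
      obtain ⟨h3, h4, h5⟩ := ih.2 ⟨by simp, by simp⟩
      refine ⟨by simp, fun _ => ⟨h3, h4, ?_⟩⟩
      rw [show wt1 St.q1 = 2 from rfl] at h5
      rw [show wt1 St.q0 = 0 from rfl]
      omega
    | q1 => exact absurd h0 (by decide)
    | q2 => exact absurd h0 (by decide)
    | q3 => exact absurd h0 (by decide)
    | q4 => exact absurd h0 (by decide)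
  | @step1 s t1 u p q h0 hstep hr ih =>
    cases s with
    | q0 => exact absurd h0 (by decide)
    | q1 =>
      simp only [show M1.step St.q1 (some ()) = some St.q2 from rfl,
        Option.some.injEq] at hstep
      subst hstep
      obtain ⟨h3, h4, h5⟩ := ih.2 ⟨by simp, by simp⟩
      refine ⟨by simp, fun _ => ⟨h3, h4, ?_⟩⟩
      rw [show wt1 St.q2 = 1 from rfl] at h5
      rw [show wt1 St.q1 = 2 from rfl]
      omega
    | q2 =>
      simp only [show M1.step St.q2 (some ()) = some St.q0 from rfl,
        Option.some.injEq] at hstep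
      subst hstep
      obtain ⟨h3, h4, h5⟩ := ih.2 ⟨by simp, by simp⟩
      refine ⟨by simp, fun _ => ⟨h3, h4, ?_⟩⟩
      rw [show wt1 St.q0 = 0 from rfl] at h5
      rw [show wt1 St.q2 = 1 from rfl]
      omega
    | q3 => simp [show M1.step St.q3 (some ()) = none from rfl] at hstep
    | q4 => simp [show M1.step St.q4 (some ()) = none from rfl] at hstep

lemma M1_cycle (m : ℕ) : ReadX M1 .q0 m (2*m) .q0 := by
  induction m with
  | zero => exact ReadX.refl _
  | succ m ih =>
    have one : ReadX M1 .q0 1 2 .q0 :=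
      ReadX.step0 rfl rfl (ReadX.step1 rfl rfl (ReadX.step1 rfl rfl (ReadX.refl _)))
    have e1 : m + 1 = 1 + m := by omega
    have e2 : 2*(m+1) = 2 + 2*m := by omega
    rw [e2, e1]
    exact readx_trans one ih

lemma M1_tail3 {ℓ : ℕ} {f : M1.State} (h : Tail M1 1 St.q3 ℓ f) : ℓ = 0 := by
  obtain ⟨s0, hs, h⟩ : ∃ s0 : M1.State, s0 = St.q3 ∧ Tail M1 1 s0 ℓ f := ⟨_, rfl, h⟩
  cases h with
  | last hi hstep => rfl
  | step hi hstep ht => subst hs; simp [show M1.step St.q3 (some ()) = none from rfl] at hstep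

lemma M1_accepts_iff (a b : ℕ) : M1.Accepts (wrd a b) ↔ b = 2*a := by
  constructor
  · intro hacc
    have hstart : M1.start = St.q0 := rfl
    rcases accepts_decomp hacc with ⟨q, u, hq, ⟨s', hrx, ht, hst⟩, f, hf, htail⟩ |
        ⟨p, u, hp, ⟨s', hrx, ht, hst⟩, f, hf, htail⟩
    · rw [hstart] at hrx
      cases s' with
      | q0 =>
        have hinv := (M1_inv hrx).2 ⟨by simp, by simp⟩
        have hq2 : q = 2*a := by
          have := hinv.2.2
          rw [show wt1 St.q0 = 0 from rfl] at this
          omega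
        simp only [show M1.step St.q0 none = some St.q3 from rfl,
          Option.some.injEq] at hst
        subst hst
        have := M1_tail3 htail
        omega
      | q1 => exact absurd ht (by decide)
      | q2 => exact absurd ht (by decide)
      | q3 => exact absurd ht (by decide)
      | q4 => exact absurd ht (by decide)
    · exfalso
      rw [hstart] at hrx
      have hinv := (M1_inv hrx).2 ⟨by simp, by simp⟩
      cases s' with
      | q0 => exact absurd ht (by decide)
      | q1 => simp [show M1.step St.q1 none = none from rfl] at hst
      | q2 => simp [show M1.step St.q2 none = none from rfl] at hst
      | q3 => exact hinv.1 rfl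
      | q4 => exact hinv.2.1 rfl
  · rintro rfl
    have hdev : Dev M1 0 a (2*a) St.q3 := ⟨.q0, M1_cycle a, rfl, rfl⟩
    have hacc : AccT M1 1 St.q3 0 := ⟨.q4, rfl, Tail.last rfl rfl⟩
    simpa using accepts_build0 hdev hacc

end QRAux

namespace QRAux
open SemiSortedAA

/-- the machine for `L₂ = {(x^{2m}, x^m)}` -/
inductive Su : Type
  | r0 | r1 | r2 | r3 | r4
  deriving DecidableEq

instance : Fintype Su where
  elems := {.r0, .r1, .r2, .r3, .r4}
  complete := fun x => by cases x <;> simp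

abbrev M2 : SemiSortedAA Unit 2 where
  State := Su
  fintype := inferInstance
  start := .r0
  accept := {.r4}
  step s c :=
    match s, c with
    | .r0, some _ => some .r1
    | .r0, none => some .r3
    | .r1, some _ => some .r2
    | .r2, some _ => some .r0
    | .r3, none => some .r4
    | _, _ => none
  tape s := match s with | .r0 => 1 | _ => 0

def wt2 : Su → ℕ
  | .r1 => 2
  | .r2 => 1
  | _ => 0

lemma M2_inv {s : M2.State} {p q : ℕ} {t : M2.State} (h : ReadX M2 s p q t) :
    ((s = .r3 ∨ s = .r4) → (p = 0 ∧ q = 0 ∧ t = s)) ∧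
    ((s ≠ .r3 ∧ s ≠ .r4) → (t ≠ .r3 ∧ t ≠ .r4 ∧ p + wt2 t = 2*q + wt2 s)) := by
  induction h with
  | refl s => exact ⟨fun _ => ⟨rfl, rfl, rfl⟩, fun h => ⟨h.1, h.2, rfl⟩⟩
  | @step1 s t1 u p q h0 hstep hr ih =>
    cases s with
    | r0 =>
      simp only [show M2.step Su.r0 (some ()) = some Su.r1 from rfl,
        Option.some.injEq] at hstep
      subst hstep
      obtain ⟨h3, h4, h5⟩ := ih.2 ⟨by simp, by simp⟩
      refine ⟨by simp, fun _ => ⟨h3, h4, ?_⟩⟩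
      rw [show wt2 Su.r1 = 2 from rfl] at h5
      rw [show wt2 Su.r0 = 0 from rfl]
      omega
    | r1 => exact absurd h0 (by decide)
    | r2 => exact absurd h0 (by decide)
    | r3 => exact absurd h0 (by decide)
    | r4 => exact absurd h0 (by decide)
  | @step0 s t1 u p q h0 hstep hr ih =>
    cases s with
    | r0 => exact absurd h0 (by decide)
    | r1 =>
      simp only [show M2.step Su.r1 (some ()) = some Su.r2 from rfl,
        Option.some.injEq] at hstep
      subst hstep
      obtain ⟨h3, h4, h5⟩ := ih.2 ⟨by simp, by simp⟩
      refine ⟨by simp, fun _ => ⟨h3, h4, ?_⟩⟩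
      rw [show wt2 Su.r2 = 1 from rfl] at h5
      rw [show wt2 Su.r1 = 2 from rfl]
      omega
    | r2 =>
      simp only [show M2.step Su.r2 (some ()) = some Su.r0 from rfl,
        Option.some.injEq] at hstep
      subst hstep
      obtain ⟨h3, h4, h5⟩ := ih.2 ⟨by simp, by simp⟩
      refine ⟨by simp, fun _ => ⟨h3, h4, ?_⟩⟩
      rw [show wt2 Su.r0 = 0 from rfl] at h5
      rw [show wt2 Su.r2 = 1 from rfl]
      omega
    | r3 => simp [show M2.step Su.r3 (some ()) = none from rfl] at hstep
    | r4 => simp [show M2.step Su.r4 (some ()) = none from rfl] at hstep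

lemma M2_cycle (m : ℕ) : ReadX M2 .r0 (2*m) m .r0 := by
  induction m with
  | zero => exact ReadX.refl _
  | succ m ih =>
    have one : ReadX M2 .r0 2 1 .r0 :=
      ReadX.step1 rfl rfl (ReadX.step0 rfl rfl (ReadX.step0 rfl rfl (ReadX.refl _)))
    have e1 : m + 1 = 1 + m := by omega
    have e2 : 2*(m+1) = 2 + 2*m := by omega
    rw [e2, e1]
    exact readx_trans one ih

lemma M2_tail3 {ℓ : ℕ} {f : M2.State} (h : Tail M2 0 Su.r3 ℓ f) : ℓ = 0 := by
  obtain ⟨s0, hs, h⟩ : ∃ s0 : M2.State, s0 = Su.r3 ∧ Tail M2 0 s0 ℓ f := ⟨_, rfl, h⟩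
  cases h with
  | last hi hstep => rfl
  | step hi hstep ht => subst hs; simp [show M2.step Su.r3 (some ()) = none from rfl] at hstep

lemma M2_accepts_iff (a b : ℕ) : M2.Accepts (wrd a b) ↔ a = 2*b := by
  constructor
  · intro hacc
    have hstart : M2.start = Su.r0 := rfl
    rcases accepts_decomp hacc with ⟨q, u, hq, ⟨s', hrx, ht, hst⟩, f, hf, htail⟩ |
        ⟨p, u, hp, ⟨s', hrx, ht, hst⟩, f, hf, htail⟩
    · exfalso
      rw [hstart] at hrx
      have hinv := (M2_inv hrx).2 ⟨by simp, by simp⟩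
      cases s' with
      | r0 => exact absurd ht (by decide)
      | r1 => simp [show M2.step Su.r1 none = none from rfl] at hst
      | r2 => simp [show M2.step Su.r2 none = none from rfl] at hst
      | r3 => exact hinv.1 rfl
      | r4 => exact hinv.2.1 rfl
    · rw [hstart] at hrx
      cases s' with
      | r0 =>
        have hinv := (M2_inv hrx).2 ⟨by simp, by simp⟩
        have hp2 : p = 2*b := by
          have := hinv.2.2
          rw [show wt2 Su.r0 = 0 from rfl] at this
          omega
        simp only [show M2.step Su.r0 none = some Su.r3 from rfl,
          Option.some.injEq] at hst
        subst hst
        have := M2_tail3 htail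
        omega
      | r1 => exact absurd ht (by decide)
      | r2 => exact absurd ht (by decide)
      | r3 => exact absurd ht (by decide)
      | r4 => exact absurd ht (by decide)
  · rintro rfl
    have hdev : Dev M2 1 (2*b) b Su.r3 := ⟨.r0, M2_cycle b, rfl, rfl⟩
    have hacc : AccT M2 0 Su.r3 0 := ⟨.r4, rfl, Tail.last rfl rfl⟩
    simpa using accepts_build1 hdev hacc

end QRAux


open QRAux in
/-- Over the one-letter alphabet `{x}` (modelled by `Unit`), the languages
`L₁ = {(x^n, x^{2n})}` and `L₂ = {(x^{2n}, x^n)}` are quasi-regular but their union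
is not: quasi-regular languages are not closed under union. -/
theorem quasiRegular_not_closed_under_union :
    IsQuasiRegular { w : Fin 2 → List Unit |
        ∃ m : ℕ, w 0 = List.replicate m () ∧ w 1 = List.replicate (2 * m) () } ∧
    IsQuasiRegular { w : Fin 2 → List Unit |
        ∃ m : ℕ, w 0 = List.replicate (2 * m) () ∧ w 1 = List.replicate m () } ∧
    ¬ IsQuasiRegular
      ({ w : Fin 2 → List Unit |
          ∃ m : ℕ, w 0 = List.replicate m () ∧ w 1 = List.replicate (2 * m) () } ∪
        { w : Fin 2 → List Unit |
          ∃ m : ℕ, w 0 = List.replicate (2 * m) () ∧ w 1 = List.replicate m () }) := by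
  refine ⟨⟨M1, fun w => ?_⟩, ⟨M2, fun w => ?_⟩, ?_⟩
  · have hw : w = wrd (w 0).length (w 1).length := by
      funext j
      rcases fin2 j with rfl | rfl
      · rw [wrd_zero]; exact unit_list (w 0)
      · rw [wrd_one]; exact unit_list (w 1)
    constructor
    · rintro ⟨m, h0, h1⟩
      have hwm : w = wrd m (2*m) := by
        funext j
        rcases fin2 j with rfl | rfl
        · rw [wrd_zero]; exact h0
        · rw [wrd_one]; exact h1
      rw [hwm]
      exact (M1_accepts_iff m (2*m)).mpr rfl
    · intro hacc
      rw [hw] at hacc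
      have hlen := (M1_accepts_iff _ _).mp hacc
      refine ⟨(w 0).length, unit_list (w 0), ?_⟩
      rw [← hlen]
      exact unit_list (w 1)
  · have hw : w = wrd (w 0).length (w 1).length := by
      funext j
      rcases fin2 j with rfl | rfl
      · rw [wrd_zero]; exact unit_list (w 0)
      · rw [wrd_one]; exact unit_list (w 1)
    constructor
    · rintro ⟨m, h0, h1⟩
      have hwm : w = wrd (2*m) m := by
        funext j
        rcases fin2 j with rfl | rfl
        · rw [wrd_zero]; exact h0
        · rw [wrd_one]; exact h1
      rw [hwm]
      exact (M2_accepts_iff (2*m) m).mpr rfl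
    · intro hacc
      rw [hw] at hacc
      have hlen := (M2_accepts_iff _ _).mp hacc
      refine ⟨(w 1).length, ?_, unit_list (w 1)⟩
      rw [← hlen]
      exact unit_list (w 0)
  · rintro ⟨M, Hc⟩
    apply no_machine M
    intro a b
    rw [← Hc]
    constructor
    · rintro (⟨m, h0, h1⟩ | ⟨m, h0, h1⟩)
      · rw [wrd_zero] at h0
        rw [wrd_one] at h1
        have e0 := repU_eq_iff.mp h0
        have e1 := repU_eq_iff.mp h1
        omega
      · rw [wrd_zero] at h0
        rw [wrd_one] at h1
        have e0 := repU_eq_iff.mp h0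
        have e1 := repU_eq_iff.mp h1
        omega
    · rintro (h | h)
      · exact Or.inl ⟨a, wrd_zero a b, by rw [wrd_one, h]⟩
      · exact Or.inr ⟨b, by rw [wrd_zero, h], wrd_one a b⟩
end

section
/- Let n >= 2 and let L be a quasi-regular n-variable language over a finite alphabet A. Then the (n-1)-variable language {(x_2,...,x_n) in (A*)^{n-1} : there exists x_1 in A* with (x_1, x_2,...,x_n) in L} is weakly regular. -/
/-- The projection (existential quantification over the first coordinate) of a
quasi-regular language in at least two variables is weakly regular. -/
theorem weaklyRegular_proj_of_quasiRegular {A : Type} [Fintype A] {n : ℕ}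
    (hn : 1 ≤ n) (L : Set (Fin (n + 1) → List A)) (hL : IsQuasiRegular L) :
    IsWeaklyRegular { v : Fin n → List A | ∃ x₁ : List A, Fin.cons x₁ v ∈ L } := by
  obtain ⟨M, hM⟩ := hL
  classical
  set N : SAA A n :=
    { State := M.State × Bool
      fintype := by haveI := M.fintype; infer_instance
      start := {(M.start, false)}
      accept := {p | p.1 ∈ M.accept ∧ p.2 = true}
      step := fun p c => {q | M.tape p.1 ≠ 0 ∧ M.step p.1 c = some q.1 ∧ q.2 = p.2}
      eps := fun p => {q | M.tape p.1 = 0 ∧ p.2 = false ∧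
        ((q.2 = false ∧ ∃ a : A, M.step p.1 (some a) = some q.1) ∨
         (q.2 = true ∧ M.step p.1 none = some q.1))}
      tape := fun p => if h : M.tape p.1 = 0 then ⟨0, hn⟩ else (M.tape p.1).pred h }
    with hNdef
  have fwd : ∀ s (r : Fin (n+1) → List (Option A)) f, M.Run s r f →
      ∀ b : Bool,
        (if b then r 0 = [] else ∃ x : List A, r 0 = x.map some ++ [none]) →
        N.Run (s, b) (r ∘ Fin.succ) (f, true) := by
    intro s r f hrun
    induction hrun with
    | nil s =>
      intro b hb
      cases b with
      | false =>
        simp only [if_neg Bool.false_ne_true, Bool.false_eq_true, if_false] at hb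
        obtain ⟨x, hx⟩ := hb
        cases x <;> simp at hx
      | true =>
        exact SAA.Run.nil _
    | @step s t f c rest r h hr hrun ih =>
      intro b hb
      rcases Fin.eq_zero_or_eq_succ (M.tape s) with htape | ⟨i, htape⟩
      · -- reading from tape 0 in M : simulate by an ε-transition in N
        rw [htape] at hr
        cases b with
        | true =>
          simp only [if_pos] at hb
          rw [hb] at hr; exact absurd hr (by simp)
        | false =>
          simp only [Bool.false_eq_true, if_false] at hb
          obtain ⟨x, hx⟩ := hb
          rw [hx] at hr
          cases x with
          | nil =>
            simp only [List.map_nil, List.nil_append, List.cons.injEq] at hr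
            obtain ⟨hc, hrest⟩ := hr
            refine SAA.Run.eps (t := (t, true))
              ⟨htape, rfl, Or.inr ⟨rfl, by rw [hc]; exact h⟩⟩ ?_
            have hcomp : (Function.update r (M.tape s) rest) ∘ Fin.succ
                = r ∘ Fin.succ := by
              funext j
              show Function.update r (M.tape s) rest j.succ = r j.succ
              rw [htape, Function.update_of_ne (Fin.succ_ne_zero j)]
            have h0 : Function.update r (M.tape s) rest 0 = [] := by
              rw [htape, Function.update_self, ← hrest]
            have := ih true (by simp [h0])
            rwa [hcomp] at this
          | cons a x' =>
            simp only [List.map_cons, List.cons_append, List.cons.injEq] at hr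
            obtain ⟨hc, hrest⟩ := hr
            refine SAA.Run.eps (t := (t, false))
              ⟨htape, rfl, Or.inl ⟨rfl, a, by rw [hc]; exact h⟩⟩ ?_
            have hcomp : (Function.update r (M.tape s) rest) ∘ Fin.succ
                = r ∘ Fin.succ := by
              funext j
              show Function.update r (M.tape s) rest j.succ = r j.succ
              rw [htape, Function.update_of_ne (Fin.succ_ne_zero j)]
            have h0 : Function.update r (M.tape s) rest 0
                = x'.map some ++ [none] := by
              rw [htape, Function.update_self, ← hrest]
            have := ih false (by simp only [Bool.false_eq_true, if_false]; exact ⟨x', h0⟩)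
            rwa [hcomp] at this
      · -- reading from tape (succ i) in M : real step in N
        have hne : M.tape s ≠ 0 := by rw [htape]; exact Fin.succ_ne_zero i
        have htN : N.tape (s, b) = i := by
          have h1 : N.tape (s, b) = (M.tape s).pred hne := dif_neg hne
          have h2 : (M.tape s).pred hne = i := by
            apply Fin.succ_injective
            rw [Fin.succ_pred, htape]
          exact h1.trans h2
        refine SAA.Run.step (t := (t, b)) (c := c) (rest := rest)
          ⟨hne, h, rfl⟩ ?_ ?_
        · rw [htN]
          show r (Fin.succ i) = c :: rest
          rw [← htape]; exact hr
        · have hcomp : Function.update (r ∘ Fin.succ) (N.tape (s,b)) rest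
              = (Function.update r (M.tape s) rest) ∘ Fin.succ := by
            rw [htN, htape]
            funext j
            by_cases hj : j = i
            · subst hj; simp [Function.comp]
            · simp [Function.comp, Function.update_of_ne hj,
                Function.update_of_ne (fun hh => hj (Fin.succ_injective _ hh))]
          rw [hcomp]
          refine ih b ?_
          have h0 : Function.update r (M.tape s) rest 0 = r 0 := by
            rw [htape, Function.update_of_ne (Fin.succ_ne_zero i).symm]
          rw [h0]; exact hb
  have bwd : ∀ p (r' : Fin n → List (Option A)) q, N.Run p r' q →
      (p.2 = true → q.2 = true) ∧
      ∃ l : List (Option A), M.Run p.1 (Fin.cons l r') q.1 ∧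
        (if p.2 then l = []
         else if q.2 then ∃ x : List A, l = x.map some ++ [none]
         else ∃ x : List A, l = x.map some) := by
    intro p r' q hrun
    induction hrun with
    | nil p =>
      refine ⟨fun h => h, [], ?_, ?_⟩
      · have : (Fin.cons ([] : List (Option A)) (fun _ : Fin n => [])
            : Fin (n+1) → List (Option A)) = fun _ => [] := by
          funext j
          refine Fin.cases rfl (fun i => rfl) j
        rw [this]; exact SemiSortedAA.Run.nil _
      · cases hp : p.2 <;> simp [hp]
    | @eps p q' f r h hrun ih =>
      obtain ⟨htape, hpb, hcase⟩ := h
      obtain ⟨himp, l, hMrun, hshape⟩ := ih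
      have hupd : ∀ (l' : List (Option A)),
          Function.update (Fin.cons l' r : Fin (n+1) → List (Option A)) 0 l
            = Fin.cons l r := by
        intro l'
        funext j
        refine Fin.cases ?_ (fun i => ?_) j
        · simp
        · simp [Function.update_of_ne (Fin.succ_ne_zero i)]
      rcases hcase with ⟨hq2, a, hstep⟩ | ⟨hq2, hstep⟩
      · refine ⟨by simp [hpb], some a :: l, ?_, ?_⟩
        · refine SemiSortedAA.Run.step (t := q'.1) (c := some a) (rest := l)
            hstep ?_ ?_
          · rw [htape]; simp
          · rw [htape, hupd]; exact hMrun
        · rw [hq2] at hshape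
          rw [if_neg (by simp [hpb])] at hshape ⊢
          cases hf : f.2 with
          | false =>
            rw [if_neg (by simp [hf])] at hshape
            rw [if_neg (by simp)]
            obtain ⟨x, hx⟩ := hshape
            exact ⟨a :: x, by simp [hx]⟩
          | true =>
            rw [if_pos hf] at hshape
            rw [if_pos rfl]
            obtain ⟨x, hx⟩ := hshape
            exact ⟨a :: x, by simp [hx]⟩
      · have hf2 : f.2 = true := himp hq2
        rw [hq2] at hshape
        simp only [if_pos] at hshape
        refine ⟨by simp [hpb], none :: l, ?_, ?_⟩
        · refine SemiSortedAA.Run.step (t := q'.1) (c := none) (rest := l)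
            hstep ?_ ?_
          · rw [htape]; simp
          · rw [htape, hupd]; exact hMrun
        · rw [if_neg (by simp [hpb]), if_pos (by simp [hf2]), hshape]
          exact ⟨[], rfl⟩
    | @step p q' f c rest r h hr hrun ih =>
      obtain ⟨hne, hstep, hb2⟩ := h
      obtain ⟨himp, l, hMrun, hshape⟩ := ih
      set i : Fin n := (M.tape p.1).pred hne with hi
      have htN : N.tape p = i := dif_neg hne
      have htape : M.tape p.1 = Fin.succ i := (Fin.succ_pred _ hne).symm
      refine ⟨fun hh => himp (hb2.trans hh), l, ?_, ?_⟩
      · refine SemiSortedAA.Run.step (t := q'.1) (c := c) (rest := rest)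
          hstep ?_ ?_
        · rw [htape]
          show r i = c :: rest
          rw [← htN]; exact hr
        · have : Function.update (Fin.cons l r : Fin (n+1) → List (Option A))
              (M.tape p.1) rest = Fin.cons l (Function.update r i rest) := by
            rw [htape]
            funext j
            refine Fin.cases ?_ (fun k => ?_) j
            · simp [Function.update_of_ne (Fin.succ_ne_zero i).symm]
            · by_cases hk : k = i
              · subst hk; simp
              · simp [Function.update_of_ne hk,
                  Function.update_of_ne (fun hh => hk (Fin.succ_injective _ hh))]
          rw [this, ← htN]; exact hMrun
      · rw [hb2] at hshape; exact hshape
  refine ⟨N, fun v => ?_⟩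
  constructor
  · rintro ⟨x, hx⟩
    obtain ⟨f, hf, hrun⟩ := (hM _).1 hx
    have h0 : (fun i => ((Fin.cons x v : Fin (n+1) → List A) i).map some ++ [none]) 0
        = x.map some ++ [none] := by simp
    have := fwd _ _ _ hrun false (by simp only [Bool.false_eq_true, if_false]; exact ⟨x, h0⟩)
    refine ⟨(M.start, false), rfl, (f, true), ⟨hf, rfl⟩, ?_⟩
    have hcomp : (fun i => ((Fin.cons x v : Fin (n+1) → List A) i).map some ++ [none])
        ∘ Fin.succ = fun i => (v i).map some ++ [none] := by
      funext j; simp [Function.comp]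
    rwa [hcomp] at this
  · rintro ⟨s₀, hs₀, f, hfacc, hrun⟩
    have hs₀' : s₀ = (M.start, false) := hs₀
    obtain ⟨hf1, hf2⟩ := hfacc
    subst hs₀'
    obtain ⟨-, l, hMrun, hshape⟩ := bwd _ _ _ hrun
    simp only [hf2, Bool.false_eq_true, if_false, if_pos] at hshape
    obtain ⟨x, hx⟩ := hshape
    refine ⟨x, (hM _).2 ⟨f.1, hf1, ?_⟩⟩
    have : (Fin.cons l (fun i => (v i).map some ++ [none])
        : Fin (n+1) → List (Option A))
        = fun i => ((Fin.cons x v : Fin (n+1) → List A) i).map some ++ [none] := by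
      funext j
      refine Fin.cases ?_ (fun k => ?_) j
      · simp [hx]
      · simp
    rwa [this] at hMrun
end
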